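/- The CF reduction relation on morphism terms of 𝒟 is strongly normalizing and weakly Church–Rosser; consequently every morphism term g has a unique CF normal form CF(g). -/

import Mathlib

open CategoryTheory

universe u v

namespace GDin

/-! ### Graphs in the sense of the paper -/

/-- Vertices of a graph with `m` left-hand argument places, `n` right-hand argument
places and `g` auxiliary `G`-vertices. -/
abbrev Vtx (m n g : ℕ) := (Fin m ⊕ Fin n) ⊕ Fin g

/-- The "same component" relation generated by a set of edges. -/
def Conn {V : Type*} (E : V → V → Prop) : V → V → Prop := Relation.EqvGen E

/-- A graph in the sense of the paper.  The sign (variance) functions `sL` (for the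
left-hand argument places `x₁,…,x_m`) and `sR` (for the right-hand argument places
`y₁,…,y_n`) are parameters; `true` means positive (covariant), `false` negative.
The structure also carries the number `k` of connected components together with the
component classifier `π`. -/
structure GGraph (m n g : ℕ) (sL : Fin m → Bool) (sR : Fin n → Bool) : Type where
  edge : Vtx m n g → Vtx m n g → Prop
  symm : ∀ u v, edge u v → edge v u
  /-- condition 1: every vertex belongs to some edge -/
  covered : ∀ v, ∃ w, edge v w
  /-- condition 2: an edge joins two left-hand argument places iff they have opposite
  signs and lie in the same component -/
  condX : ∀ i j : Fin m, edge (.inl (.inl i)) (.inl (.inl j)) ↔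
    (sL i = !sL j ∧ Conn edge (.inl (.inl i)) (.inl (.inl j)))
  /-- condition 3 -/
  condY : ∀ i j : Fin n, edge (.inl (.inr i)) (.inl (.inr j)) ↔
    (sR i = !sR j ∧ Conn edge (.inl (.inr i)) (.inl (.inr j)))
  /-- condition 4 -/
  condXY : ∀ (i : Fin m) (j : Fin n), edge (.inl (.inl i)) (.inl (.inr j)) ↔
    (sL i = sR j ∧ Conn edge (.inl (.inl i)) (.inl (.inr j)))
  /-- condition 5, first half: if a component contains an edge between two argument
  places then it contains no `G`-vertex -/
  condG₁ : ∀ v : Vtx m n g,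
    (∃ u w : Fin m ⊕ Fin n, Conn edge (.inl u) v ∧ edge (.inl u) (.inl w)) →
      ∀ a : Fin g, ¬ Conn edge (.inr a) v
  /-- condition 5, second half: otherwise the component contains exactly one
  `G`-vertex -/
  condG₂ : ∀ v : Vtx m n g,
    (¬ ∃ u w : Fin m ⊕ Fin n, Conn edge (.inl u) v ∧ edge (.inl u) (.inl w)) →
      ∃! a : Fin g, Conn edge (.inr a) v
  /-- condition 5: every other vertex of such a component is joined to the
  `G`-vertex by an edge -/
  condG₃ : ∀ (a : Fin g) (u : Fin m ⊕ Fin n),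
    Conn edge (.inl u) (.inr a) → edge (.inl u) (.inr a)
  /-- the number of components -/
  k : ℕ
  /-- the component classifier -/
  π : Vtx m n g → Fin k
  π_surj : Function.Surjective π
  π_eq : ∀ u v, π u = π v ↔ Conn edge u v

namespace GGraph

variable {m n g : ℕ} {sL : Fin m → Bool} {sR : Fin n → Bool}

/-- component of the `i`-th left-hand argument place -/
def πL (Γ : GGraph m n g sL sR) (i : Fin m) : Fin Γ.k := Γ.π (.inl (.inl i))

/-- component of the `j`-th right-hand argument place -/
def πR (Γ : GGraph m n g sL sR) (j : Fin n) : Fin Γ.k := Γ.π (.inl (.inr j))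

end GGraph

/-! ### Variance-indexed categories and g-dinaturality -/

/-- `B` or `Bᵒᵖ` according to a variance. -/
def VarCat (B : Type u) [Category.{v} B] : Bool → Type u
  | true => B
  | false => Bᵒᵖ

instance (B : Type u) [Category.{v} B] : ∀ b, Category.{v} (VarCat B b)
  | true => (inferInstance : Category B)
  | false => (inferInstance : Category Bᵒᵖ)

variable {B : Type u} [Category.{v} B]

/-- The object of `B` or `Bᵒᵖ` with `P` at a positive argument place and `N` at a
negative one. -/
def pairObj : (b : Bool) → B → B → VarCat B b
  | true, P, _ => P
  | false, _, N => Opposite.op N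

/-- The morphism with `u` at a positive argument place and `v` (contravariantly) at a
negative one. -/
def pairHom : (b : Bool) → {P P' N N' : B} → (P ⟶ P') → (N' ⟶ N) →
    (pairObj b P N ⟶ pairObj b P' N')
  | true, _, _, _, _, u, _ => u
  | false, _, _, _, _, _, v => v.op

variable {ι : Type} {k : ℕ}

/-- The tuple of objects `⟨u,v⟩` with `u` in all positive and `v` in all negative
argument places. -/
@[reducible] def tupObj (s : ι → Bool) (P N : B) : ∀ i, VarCat B (s i) :=
  fun i => pairObj (s i) P N

/-- The corresponding tuple of morphisms. -/
def tupHom (s : ι → Bool) {P P' N N' : B} (u : P ⟶ P') (v : N' ⟶ N) :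
    (tupObj s P N ⟶ tupObj s P' N') :=
  fun i => pairHom (s i) u v

/-- The diagonal-like tuple of objects determined by an assignment of objects to
the components of a graph. -/
@[reducible] def diagObj (s : ι → Bool) (pl : ι → Fin k) (A : Fin k → B) :
    ∀ i, VarCat B (s i) :=
  fun i => pairObj (s i) (A (pl i)) (A (pl i))

/-- The tuple of objects obtained from the component assignment `A` by replacing the
value of component `c` by `P` at positive and `N` at negative argument places. -/
def hexObj (s : ι → Bool) (pl : ι → Fin k) (c : Fin k) (A : Fin k → B) (P N : B) :
    ∀ i, VarCat B (s i) :=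
  fun i => if pl i = c then pairObj (s i) P N else pairObj (s i) (A (pl i)) (A (pl i))

/-- The corresponding tuple of morphisms (identities outside component `c`). -/
def hexHom (s : ι → Bool) (pl : ι → Fin k) (c : Fin k) (A : Fin k → B)
    {P P' N N' : B} (u : P ⟶ P') (v : N' ⟶ N) :
    (hexObj s pl c A P N ⟶ hexObj s pl c A P' N') :=
  fun i => by
    unfold hexObj
    by_cases h : pl i = c
    · simp only [if_pos h]; exact pairHom (s i) u v
    · simp only [if_neg h]; exact 𝟙 _

/-- update of a component assignment -/
def updF {γ : Type*} (A : Fin k → γ) (c : Fin k) (X : γ) : Fin k → γ :=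
  fun j => if j = c then X else A j

theorem diag_upd (s : ι → Bool) (pl : ι → Fin k) (c : Fin k) (A : Fin k → B) (X : B) :
    diagObj s pl (updF A c X) = hexObj s pl c A X X := by
  funext i
  unfold diagObj hexObj updF
  by_cases h : pl i = c <;> simp [h]

/-- g-dinaturality of a transformation with respect to a graph: in every component
and for every morphism `f : P ⟶ Q` (all other components being kept fixed), the
g-dinaturality hexagon commutes. -/
def IsGDin {m n gΓ : ℕ} {sL : Fin m → Bool} {sR : Fin n → Bool}
    (Γ : GGraph m n gΓ sL sR)
    (T : (∀ i : Fin m, VarCat B (sL i)) ⥤ B)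
    (S : (∀ j : Fin n, VarCat B (sR j)) ⥤ B)
    (α : ∀ A : Fin Γ.k → B, T.obj (diagObj sL Γ.πL A) ⟶ S.obj (diagObj sR Γ.πR A)) :
    Prop :=
  ∀ (c : Fin Γ.k) (A : Fin Γ.k → B) (P Q : B) (f : P ⟶ Q),
    T.map (hexHom sL Γ.πL c A f (𝟙 Q)) ≫
      eqToHom (congrArg T.obj (diag_upd sL Γ.πL c A Q).symm) ≫
      α (updF A c Q) ≫
      eqToHom (congrArg S.obj (diag_upd sR Γ.πR c A Q)) ≫
      S.map (hexHom sR Γ.πR c A (𝟙 Q) f)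
    = T.map (hexHom sL Γ.πL c A (𝟙 P) f) ≫
      eqToHom (congrArg T.obj (diag_upd sL Γ.πL c A P).symm) ≫
      α (updF A c P) ≫
      eqToHom (congrArg S.obj (diag_upd sR Γ.πR c A P)) ≫
      S.map (hexHom sR Γ.πR c A f (𝟙 P))

/-- The g-dinaturality hexagon for a transformation whose graph has a single
component (so that only the signs of the argument places matter). -/
def SingleHex {ιx ιz : Type} (sx : ιx → Bool) (sz : ιz → Bool)
    (F : (∀ i : ιx, VarCat B (sx i)) ⥤ B) (H : (∀ l : ιz, VarCat B (sz l)) ⥤ B)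
    (φ : ∀ A : B, F.obj (tupObj sx A A) ⟶ H.obj (tupObj sz A A)) : Prop :=
  ∀ (P Q : B) (f : P ⟶ Q),
    F.map (tupHom sx f (𝟙 Q)) ≫ φ Q ≫ H.map (tupHom sz (𝟙 Q) f)
    = F.map (tupHom sx (𝟙 P) f) ≫ φ P ≫ H.map (tupHom sz f (𝟙 P))


/-! ### The free category `𝒟` of the equational class `𝒦_{Φ,Ψ}` -/

/-- Objects of `𝒟`: freely generated over `{A, C}` by an `m`-ary operation `T`,
an `n`-ary operation `S` and a `p`-ary operation `R`. -/
inductive DObj (m n p : ℕ) : Type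
  | A : DObj m n p
  | C : DObj m n p
  | T : (Fin m → DObj m n p) → DObj m n p
  | S : (Fin n → DObj m n p) → DObj m n p
  | R : (Fin p → DObj m n p) → DObj m n p

/-- source of a functor argument according to its variance -/
abbrev dSrc {γ : Type*} (b : Bool) (X Y : γ) : γ := cond b X Y
/-- target of a functor argument according to its variance -/
abbrev dTgt {γ : Type*} (b : Bool) (X Y : γ) : γ := cond b Y X

section DD

variable {m n p gΦ gΨ : ℕ} {sx : Fin m → Bool} {sy : Fin n → Bool} {sz : Fin p → Bool}

/-- Morphism terms of the category `𝒟`, generated from `f : A → C`, the identities,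
the generic g-dinatural transformations `α`, `β` and the operations `T`, `S`, `R`
(contravariant in their negative argument places). -/
inductive DTerm (Φ : GGraph m n gΦ sx sy) (Ψ : GGraph n p gΨ sy sz) :
    DObj m n p → DObj m n p → Type
  | f : DTerm Φ Ψ .A .C
  | id (X : DObj m n p) : DTerm Φ Ψ X X
  /-- composition, written in diagrammatic order -/
  | comp {X Y Z} : DTerm Φ Ψ X Y → DTerm Φ Ψ Y Z → DTerm Φ Ψ X Z
  | alpha (W : Fin Φ.k → DObj m n p) :
      DTerm Φ Ψ (.T fun i => W (Φ.πL i)) (.S fun j => W (Φ.πR j))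
  | beta (W : Fin Ψ.k → DObj m n p) :
      DTerm Φ Ψ (.S fun j => W (Ψ.πL j)) (.R fun l => W (Ψ.πR l))
  | mapT {X Y : Fin m → DObj m n p} :
      (∀ i, DTerm Φ Ψ (dSrc (sx i) (X i) (Y i)) (dTgt (sx i) (X i) (Y i))) →
      DTerm Φ Ψ (.T X) (.T Y)
  | mapS {X Y : Fin n → DObj m n p} :
      (∀ j, DTerm Φ Ψ (dSrc (sy j) (X j) (Y j)) (dTgt (sy j) (X j) (Y j))) →
      DTerm Φ Ψ (.S X) (.S Y)
  | mapR {X Y : Fin p → DObj m n p} :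
      (∀ l, DTerm Φ Ψ (dSrc (sz l) (X l) (Y l)) (dTgt (sz l) (X l) (Y l))) →
      DTerm Φ Ψ (.R X) (.R Y)

variable {Φ : GGraph m n gΦ sx sy} {Ψ : GGraph n p gΨ sy sz}

/-- composition of functor arguments, respecting variance -/
def dComp {X Y Z : DObj m n p} : (b : Bool) →
    DTerm Φ Ψ (dSrc b X Y) (dTgt b X Y) → DTerm Φ Ψ (dSrc b Y Z) (dTgt b Y Z) →
    DTerm Φ Ψ (dSrc b X Z) (dTgt b X Z)
  | true, g, h => .comp g h
  | false, g, h => .comp h g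

/-- identity as a functor argument -/
def dId (X : DObj m n p) : (b : Bool) → DTerm Φ Ψ (dSrc b X X) (dTgt b X X)
  | true => .id X
  | false => .id X

/-- the object tuple with `P` at the positive and `N` at the negative argument
places of component `i`, and the parameter `Z` elsewhere -/
def mixT {q k : ℕ} (pl : Fin q → Fin k) (s : Fin q → Bool) (i : Fin k)
    (Z : Fin k → DObj m n p) (P N : DObj m n p) : Fin q → DObj m n p :=
  fun j => if pl j = i then (cond (s j) P N) else Z (pl j)

section vecs
variable {q k : ℕ} (pl : Fin q → Fin k) (s : Fin q → Bool) (i : Fin k)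
  (Z : Fin k → DObj m n p) {X Y : DObj m n p} (t : DTerm Φ Ψ X Y)

/-- the argument vector `g` of the equation (α) (left-hand side, source functor):
`t` at the positive and `1_Y` at the negative argument places of component `i`,
identities elsewhere -/
def vecA : ∀ j, DTerm Φ Ψ (dSrc (s j) (mixT pl s i Z X Y j) (updF Z i Y (pl j)))
    (dTgt (s j) (mixT pl s i Z X Y j) (updF Z i Y (pl j))) := fun j => by
  unfold mixT updF
  by_cases h : pl j = i
  · simp only [if_pos h]
    cases hs : s j
    · exact .id Y
    · exact t
  · simp only [if_neg h]
    exact dId (Z (pl j)) (s j)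

/-- the argument vector `h` of the equation (α) (left-hand side, target functor) -/
def vecB : ∀ j, DTerm Φ Ψ (dSrc (s j) (updF Z i Y (pl j)) (mixT pl s i Z Y X j))
    (dTgt (s j) (updF Z i Y (pl j)) (mixT pl s i Z Y X j)) := fun j => by
  unfold mixT updF
  by_cases h : pl j = i
  · simp only [if_pos h]
    cases hs : s j
    · exact t
    · exact .id Y
  · simp only [if_neg h]
    exact dId (Z (pl j)) (s j)

/-- the argument vector `g'` of the equation (α) (right-hand side, source functor) -/
def vecC : ∀ j, DTerm Φ Ψ (dSrc (s j) (mixT pl s i Z X Y j) (updF Z i X (pl j)))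
    (dTgt (s j) (mixT pl s i Z X Y j) (updF Z i X (pl j))) := fun j => by
  unfold mixT updF
  by_cases h : pl j = i
  · simp only [if_pos h]
    cases hs : s j
    · exact t
    · exact .id X
  · simp only [if_neg h]
    exact dId (Z (pl j)) (s j)

/-- the argument vector `h'` of the equation (α) (right-hand side, target functor) -/
def vecD : ∀ j, DTerm Φ Ψ (dSrc (s j) (updF Z i X (pl j)) (mixT pl s i Z Y X j))
    (dTgt (s j) (updF Z i X (pl j)) (mixT pl s i Z Y X j)) := fun j => by
  unfold mixT updF
  by_cases h : pl j = i
  · simp only [if_pos h]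
    cases hs : s j
    · exact .id X
    · exact t
  · simp only [if_neg h]
    exact dId (Z (pl j)) (s j)

end vecs

/-- Equality of morphism terms of `𝒟`: the congruence generated by the
`𝒦_{Φ,Ψ}`-equations (categorial, functorial and g-dinatural equations). -/
inductive DEq : ∀ {X Y : DObj m n p}, DTerm Φ Ψ X Y → DTerm Φ Ψ X Y → Prop
  | refl {X Y} (g : DTerm Φ Ψ X Y) : DEq g g
  | symm {X Y} {g h : DTerm Φ Ψ X Y} : DEq g h → DEq h g
  | trans {X Y} {g h t : DTerm Φ Ψ X Y} : DEq g h → DEq h t → DEq g t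
  | comp_congr {X Y Z} {g g' : DTerm Φ Ψ X Y} {h h' : DTerm Φ Ψ Y Z} :
      DEq g g' → DEq h h' → DEq (.comp g h) (.comp g' h')
  | mapT_congr {X Y : Fin m → DObj m n p} {a b : ∀ i, DTerm Φ Ψ (dSrc (sx i) (X i) (Y i)) (dTgt (sx i) (X i) (Y i))} :
      (∀ i, DEq (a i) (b i)) → DEq (.mapT a) (.mapT b)
  | mapS_congr {X Y : Fin n → DObj m n p} {a b : ∀ j, DTerm Φ Ψ (dSrc (sy j) (X j) (Y j)) (dTgt (sy j) (X j) (Y j))} :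
      (∀ j, DEq (a j) (b j)) → DEq (.mapS a) (.mapS b)
  | mapR_congr {X Y : Fin p → DObj m n p} {a b : ∀ l, DTerm Φ Ψ (dSrc (sz l) (X l) (Y l)) (dTgt (sz l) (X l) (Y l))} :
      (∀ l, DEq (a l) (b l)) → DEq (.mapR a) (.mapR b)
  -- categorial equations
  | id_left {X Y} (g : DTerm Φ Ψ X Y) : DEq (.comp (.id X) g) g
  | id_right {X Y} (g : DTerm Φ Ψ X Y) : DEq (.comp g (.id Y)) g
  | assoc {X Y Z W} (g : DTerm Φ Ψ X Y) (h : DTerm Φ Ψ Y Z) (t : DTerm Φ Ψ Z W) :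
      DEq (.comp (.comp g h) t) (.comp g (.comp h t))
  -- functorial equations
  | functT {X Y Z : Fin m → DObj m n p}
      (a : ∀ i, DTerm Φ Ψ (dSrc (sx i) (X i) (Y i)) (dTgt (sx i) (X i) (Y i)))
      (b : ∀ i, DTerm Φ Ψ (dSrc (sx i) (Y i) (Z i)) (dTgt (sx i) (Y i) (Z i))) :
      DEq (.comp (.mapT a) (.mapT b)) (.mapT (fun i => dComp (sx i) (a i) (b i)))
  | functS {X Y Z : Fin n → DObj m n p}
      (a : ∀ j, DTerm Φ Ψ (dSrc (sy j) (X j) (Y j)) (dTgt (sy j) (X j) (Y j)))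
      (b : ∀ j, DTerm Φ Ψ (dSrc (sy j) (Y j) (Z j)) (dTgt (sy j) (Y j) (Z j))) :
      DEq (.comp (.mapS a) (.mapS b)) (.mapS (fun j => dComp (sy j) (a j) (b j)))
  | functR {X Y Z : Fin p → DObj m n p}
      (a : ∀ l, DTerm Φ Ψ (dSrc (sz l) (X l) (Y l)) (dTgt (sz l) (X l) (Y l)))
      (b : ∀ l, DTerm Φ Ψ (dSrc (sz l) (Y l) (Z l)) (dTgt (sz l) (Y l) (Z l))) :
      DEq (.comp (.mapR a) (.mapR b)) (.mapR (fun l => dComp (sz l) (a l) (b l)))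
  | functT_id (X : Fin m → DObj m n p) :
      DEq (.mapT (fun i => dId (X i) (sx i))) (.id (.T X))
  | functS_id (X : Fin n → DObj m n p) :
      DEq (.mapS (fun j => dId (X j) (sy j))) (.id (.S X))
  | functR_id (X : Fin p → DObj m n p) :
      DEq (.mapR (fun l => dId (X l) (sz l))) (.id (.R X))
  -- g-dinatural equations
  | alphaEq (i : Fin Φ.k) (Z : Fin Φ.k → DObj m n p) {X Y : DObj m n p}
      (t : DTerm Φ Ψ X Y) :
      DEq (.comp (.mapT (vecA Φ.πL sx i Z t))
            (.comp (.alpha (updF Z i Y)) (.mapS (vecB Φ.πR sy i Z t))))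
          (.comp (.mapT (vecC Φ.πL sx i Z t))
            (.comp (.alpha (updF Z i X)) (.mapS (vecD Φ.πR sy i Z t))))
  | betaEq (i : Fin Ψ.k) (Z : Fin Ψ.k → DObj m n p) {X Y : DObj m n p}
      (t : DTerm Φ Ψ X Y) :
      DEq (.comp (.mapS (vecA Ψ.πL sy i Z t))
            (.comp (.beta (updF Z i Y)) (.mapR (vecB Ψ.πR sz i Z t))))
          (.comp (.mapS (vecC Ψ.πL sy i Z t))
            (.comp (.beta (updF Z i X)) (.mapR (vecD Ψ.πR sz i Z t))))

end DD

section CFsec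
variable {m n p gΦ gΨ : ℕ} {sx : Fin m → Bool} {sy : Fin n → Bool} {sz : Fin p → Bool}
variable {Φ : GGraph m n gΦ sx sy} {Ψ : GGraph n p gΨ sy sz}

/-- identity of morphism terms up to associativity of composition -/
inductive AEq : ∀ {X Y : DObj m n p}, DTerm Φ Ψ X Y → DTerm Φ Ψ X Y → Prop
  | refl {X Y} (g : DTerm Φ Ψ X Y) : AEq g g
  | symm {X Y} {g h : DTerm Φ Ψ X Y} : AEq g h → AEq h g
  | trans {X Y} {g h t : DTerm Φ Ψ X Y} : AEq g h → AEq h t → AEq g t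
  | comp_congr {X Y Z} {g g' : DTerm Φ Ψ X Y} {h h' : DTerm Φ Ψ Y Z} :
      AEq g g' → AEq h h' → AEq (.comp g h) (.comp g' h')
  | mapT_congr {X Y : Fin m → DObj m n p}
      {a b : ∀ i, DTerm Φ Ψ (dSrc (sx i) (X i) (Y i)) (dTgt (sx i) (X i) (Y i))} :
      (∀ i, AEq (a i) (b i)) → AEq (.mapT a) (.mapT b)
  | mapS_congr {X Y : Fin n → DObj m n p}
      {a b : ∀ j, DTerm Φ Ψ (dSrc (sy j) (X j) (Y j)) (dTgt (sy j) (X j) (Y j))} :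
      (∀ j, AEq (a j) (b j)) → AEq (.mapS a) (.mapS b)
  | mapR_congr {X Y : Fin p → DObj m n p}
      {a b : ∀ l, DTerm Φ Ψ (dSrc (sz l) (X l) (Y l)) (dTgt (sz l) (X l) (Y l))} :
      (∀ l, AEq (a l) (b l)) → AEq (.mapR a) (.mapR b)
  | assoc {X Y Z W} (g : DTerm Φ Ψ X Y) (h : DTerm Φ Ψ Y Z) (t : DTerm Φ Ψ Z W) :
      AEq (.comp (.comp g h) t) (.comp g (.comp h t))

/-- a single categorial-functorial (`CF`) contraction, applied in an arbitrary
subterm position -/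
inductive CFRaw : ∀ {X Y : DObj m n p}, DTerm Φ Ψ X Y → DTerm Φ Ψ X Y → Prop
  | id_left {X Y} (g : DTerm Φ Ψ X Y) : CFRaw (.comp (.id X) g) g
  | id_right {X Y} (g : DTerm Φ Ψ X Y) : CFRaw (.comp g (.id Y)) g
  | functT {X Y Z : Fin m → DObj m n p}
      (a : ∀ i, DTerm Φ Ψ (dSrc (sx i) (X i) (Y i)) (dTgt (sx i) (X i) (Y i)))
      (b : ∀ i, DTerm Φ Ψ (dSrc (sx i) (Y i) (Z i)) (dTgt (sx i) (Y i) (Z i))) :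
      CFRaw (.comp (.mapT a) (.mapT b)) (.mapT (fun i => dComp (sx i) (a i) (b i)))
  | functS {X Y Z : Fin n → DObj m n p}
      (a : ∀ j, DTerm Φ Ψ (dSrc (sy j) (X j) (Y j)) (dTgt (sy j) (X j) (Y j)))
      (b : ∀ j, DTerm Φ Ψ (dSrc (sy j) (Y j) (Z j)) (dTgt (sy j) (Y j) (Z j))) :
      CFRaw (.comp (.mapS a) (.mapS b)) (.mapS (fun j => dComp (sy j) (a j) (b j)))
  | functR {X Y Z : Fin p → DObj m n p}
      (a : ∀ l, DTerm Φ Ψ (dSrc (sz l) (X l) (Y l)) (dTgt (sz l) (X l) (Y l)))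
      (b : ∀ l, DTerm Φ Ψ (dSrc (sz l) (Y l) (Z l)) (dTgt (sz l) (Y l) (Z l))) :
      CFRaw (.comp (.mapR a) (.mapR b)) (.mapR (fun l => dComp (sz l) (a l) (b l)))
  | functT_id (X : Fin m → DObj m n p) :
      CFRaw (.mapT (fun i => dId (X i) (sx i))) (.id (.T X))
  | functS_id (X : Fin n → DObj m n p) :
      CFRaw (.mapS (fun j => dId (X j) (sy j))) (.id (.S X))
  | functR_id (X : Fin p → DObj m n p) :
      CFRaw (.mapR (fun l => dId (X l) (sz l))) (.id (.R X))
  | comp_left {X Y Z} {g g' : DTerm Φ Ψ X Y} (h : DTerm Φ Ψ Y Z) :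
      CFRaw g g' → CFRaw (.comp g h) (.comp g' h)
  | comp_right {X Y Z} (g : DTerm Φ Ψ X Y) {h h' : DTerm Φ Ψ Y Z} :
      CFRaw h h' → CFRaw (.comp g h) (.comp g h')
  | mapT_arg {X Y : Fin m → DObj m n p}
      (a : ∀ i, DTerm Φ Ψ (dSrc (sx i) (X i) (Y i)) (dTgt (sx i) (X i) (Y i)))
      (i₀ : Fin m) (t' : DTerm Φ Ψ (dSrc (sx i₀) (X i₀) (Y i₀)) (dTgt (sx i₀) (X i₀) (Y i₀))) :
      CFRaw (a i₀) t' → CFRaw (.mapT a) (.mapT (Function.update a i₀ t'))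
  | mapS_arg {X Y : Fin n → DObj m n p}
      (a : ∀ j, DTerm Φ Ψ (dSrc (sy j) (X j) (Y j)) (dTgt (sy j) (X j) (Y j)))
      (j₀ : Fin n) (t' : DTerm Φ Ψ (dSrc (sy j₀) (X j₀) (Y j₀)) (dTgt (sy j₀) (X j₀) (Y j₀))) :
      CFRaw (a j₀) t' → CFRaw (.mapS a) (.mapS (Function.update a j₀ t'))
  | mapR_arg {X Y : Fin p → DObj m n p}
      (a : ∀ l, DTerm Φ Ψ (dSrc (sz l) (X l) (Y l)) (dTgt (sz l) (X l) (Y l)))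
      (l₀ : Fin p) (t' : DTerm Φ Ψ (dSrc (sz l₀) (X l₀) (Y l₀)) (dTgt (sz l₀) (X l₀) (Y l₀))) :
      CFRaw (a l₀) t' → CFRaw (.mapR a) (.mapR (Function.update a l₀ t'))

/-- a `CF` reduction step on morphism terms identified up to associativity of
composition -/
def CFStep {X Y : DObj m n p} (g h : DTerm Φ Ψ X Y) : Prop :=
  ∃ g' h', AEq g g' ∧ CFRaw g' h' ∧ AEq h' h

/-- `g` is in `CF` normal form -/
def CFNormal {X Y : DObj m n p} (g : DTerm Φ Ψ X Y) : Prop := ¬ ∃ h, CFStep g h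

end CFsec

section ConfProof
variable {m n p gΦ gΨ : ℕ} {sx : Fin m → Bool} {sy : Fin n → Bool} {sz : Fin p → Bool}
variable {Φ : GGraph m n gΦ sx sy} {Ψ : GGraph n p gΨ sy sz}

/-- a weight on morphism terms, multiplicative under composition -/
def wt : ∀ {X Y : DObj m n p}, DTerm Φ Ψ X Y → ℕ
  | _, _, .f => 2
  | _, _, .id _ => 2
  | _, _, .alpha _ => 2
  | _, _, .beta _ => 2
  | _, _, .comp g h => wt g * wt h
  | _, _, .mapT a => 2 * (∏ i, wt (a i)) + 1
  | _, _, .mapS a => 2 * (∏ j, wt (a j)) + 1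
  | _, _, .mapR a => 2 * (∏ l, wt (a l)) + 1

theorem wt_pos {X Y : DObj m n p} (g : DTerm Φ Ψ X Y) : 2 ≤ wt g := by
  induction g with
  | comp g h ihg ihh =>
      calc 2 = 2 * 1 := rfl
      _ ≤ wt g * wt h := Nat.mul_le_mul (le_trans (by norm_num) ihg)
        (le_trans (by norm_num) ihh)
  | mapT a ih =>
      simp only [wt]
      have : 0 < ∏ i, wt (a i) := Finset.prod_pos fun i _ => by have := ih i; omega
      omega
  | mapS a ih =>
      simp only [wt]
      have : 0 < ∏ i, wt (a i) := Finset.prod_pos fun i _ => by have := ih i; omega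
      omega
  | mapR a ih =>
      simp only [wt]
      have : 0 < ∏ i, wt (a i) := Finset.prod_pos fun i _ => by have := ih i; omega
      omega
  | _ => simp [wt]

theorem wt_dComp {X Y Z : DObj m n p} (b : Bool)
    (g : DTerm Φ Ψ (dSrc b X Y) (dTgt b X Y)) (h : DTerm Φ Ψ (dSrc b Y Z) (dTgt b Y Z)) :
    wt (dComp b g h) = wt g * wt h := by
  cases b <;> simp [dComp, wt, Nat.mul_comm]

theorem wt_dId {X : DObj m n p} (b : Bool) : wt (dId (Φ := Φ) (Ψ := Ψ) X b) = 2 := by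
  cases b <;> rfl

theorem wt_aeq {X Y : DObj m n p} {g h : DTerm Φ Ψ X Y} (e : AEq g h) : wt g = wt h := by
  induction e with
  | refl => rfl
  | symm _ ih => exact ih.symm
  | trans _ _ ih₁ ih₂ => exact ih₁.trans ih₂
  | comp_congr _ _ ih₁ ih₂ => simp [wt, ih₁, ih₂]
  | mapT_congr _ ih => simp only [wt]; rw [Finset.prod_congr rfl fun i _ => ih i]
  | mapS_congr _ ih => simp only [wt]; rw [Finset.prod_congr rfl fun i _ => ih i]
  | mapR_congr _ ih => simp only [wt]; rw [Finset.prod_congr rfl fun i _ => ih i]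
  | assoc g h t => simp [wt, Nat.mul_assoc]

private theorem prod_lt_prod_update {k : ℕ} {f : Fin k → ℕ} (i₀ : Fin k) {v : ℕ}
    (hpos : ∀ i, 0 < f i) (hlt : v < f i₀) :
    (∏ i, Function.update f i₀ v i) < ∏ i, f i := by
  classical
  rw [← Finset.prod_erase_mul _ _ (Finset.mem_univ i₀),
    ← Finset.prod_erase_mul _ _ (Finset.mem_univ i₀)]
  have h1 : (∏ i ∈ Finset.univ.erase i₀, Function.update f i₀ v i)
      = ∏ i ∈ Finset.univ.erase i₀, f i := by
    refine Finset.prod_congr rfl fun i hi => ?_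
    rw [Function.update_of_ne (Finset.ne_of_mem_erase hi)]
  rw [h1, Function.update_self]
  have hp : 0 < ∏ i ∈ Finset.univ.erase i₀, f i :=
    Finset.prod_pos fun i _ => hpos i
  exact mul_lt_mul_of_pos_left hlt hp

theorem wt_raw_lt {X Y : DObj m n p} {g h : DTerm Φ Ψ X Y} (r : CFRaw g h) :
    wt h < wt g := by
  induction r with
  | id_left g =>
      have := wt_pos g; simp only [wt]
      calc wt g = 1 * wt g := (Nat.one_mul _).symm
      _ < 2 * wt g := by
        exact Nat.mul_lt_mul_of_lt_of_le (by norm_num) (le_refl _) (by omega)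
  | id_right g =>
      have := wt_pos g; simp only [wt]
      calc wt g = wt g * 1 := (Nat.mul_one _).symm
      _ < wt g * 2 := by
        have : 0 < wt g := by omega
        exact Nat.mul_lt_mul_of_le_of_lt (le_refl _) (by norm_num) this
  | functT a b =>
      simp only [wt]
      have h1 : ∀ i, wt (dComp (sx i) (a i) (b i)) = wt (a i) * wt (b i) :=
        fun i => wt_dComp _ _ _
      rw [Finset.prod_congr rfl fun i _ => h1 i, Finset.prod_mul_distrib]
      have pa : 0 < ∏ i, wt (a i) := Finset.prod_pos fun i _ => by
        have := wt_pos (a i); omega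
      have pb : 0 < ∏ i, wt (b i) := Finset.prod_pos fun i _ => by
        have := wt_pos (b i); omega
      nlinarith
  | functS a b =>
      simp only [wt]
      have h1 : ∀ i, wt (dComp (sy i) (a i) (b i)) = wt (a i) * wt (b i) :=
        fun i => wt_dComp _ _ _
      rw [Finset.prod_congr rfl fun i _ => h1 i, Finset.prod_mul_distrib]
      have pa : 0 < ∏ i, wt (a i) := Finset.prod_pos fun i _ => by
        have := wt_pos (a i); omega
      have pb : 0 < ∏ i, wt (b i) := Finset.prod_pos fun i _ => by
        have := wt_pos (b i); omega
      nlinarith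
  | functR a b =>
      simp only [wt]
      have h1 : ∀ i, wt (dComp (sz i) (a i) (b i)) = wt (a i) * wt (b i) :=
        fun i => wt_dComp _ _ _
      rw [Finset.prod_congr rfl fun i _ => h1 i, Finset.prod_mul_distrib]
      have pa : 0 < ∏ i, wt (a i) := Finset.prod_pos fun i _ => by
        have := wt_pos (a i); omega
      have pb : 0 < ∏ i, wt (b i) := Finset.prod_pos fun i _ => by
        have := wt_pos (b i); omega
      nlinarith
  | functT_id X =>
      simp only [wt]
      have : ∀ i : Fin m, wt (dId (Φ := Φ) (Ψ := Ψ) (X i) (sx i)) = 2 := fun i => wt_dId _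
      rw [Finset.prod_congr rfl fun i _ => this i]
      have : 1 ≤ ∏ _i : Fin m, 2 := Finset.one_le_prod' fun i _ => by norm_num
      omega
  | functS_id X =>
      simp only [wt]
      have : ∀ i : Fin n, wt (dId (Φ := Φ) (Ψ := Ψ) (X i) (sy i)) = 2 := fun i => wt_dId _
      rw [Finset.prod_congr rfl fun i _ => this i]
      have : 1 ≤ ∏ _i : Fin n, 2 := Finset.one_le_prod' fun i _ => by norm_num
      omega
  | functR_id X =>
      simp only [wt]
      have : ∀ i : Fin p, wt (dId (Φ := Φ) (Ψ := Ψ) (X i) (sz i)) = 2 := fun i => wt_dId _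
      rw [Finset.prod_congr rfl fun i _ => this i]
      have : 1 ≤ ∏ _i : Fin p, 2 := Finset.one_le_prod' fun i _ => by norm_num
      omega
  | comp_left h _ ih =>
      simp only [wt]
      have := wt_pos h
      exact Nat.mul_lt_mul_of_lt_of_le ih (le_refl _) (by omega)
  | comp_right g _ ih =>
      simp only [wt]
      have hg := wt_pos g
      exact Nat.mul_lt_mul_of_le_of_lt (le_refl _) ih (by omega)
  | mapT_arg a i₀ t' _ ih =>
      simp only [wt]
      have h0 := prod_lt_prod_update (f := fun i => wt (a i)) i₀
        (fun i => by show (0:ℕ) < wt (a i); have := wt_pos (a i); omega) (v := wt t') ih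
      have h3 : (∏ i, Function.update (fun i => wt (a i)) i₀ (wt t') i)
          < ∏ i, wt (a i) := h0
      have h2 : (∏ i, wt (Function.update a i₀ t' i))
          = ∏ i, Function.update (fun i => wt (a i)) i₀ (wt t') i := by
        refine Finset.prod_congr rfl fun i _ => ?_
        by_cases hi : i = i₀
        · subst hi; simp
        · rw [Function.update_of_ne hi, Function.update_of_ne hi]
      rw [h2]; omega
  | mapS_arg a i₀ t' _ ih =>
      simp only [wt]
      have h0 := prod_lt_prod_update (f := fun i => wt (a i)) i₀
        (fun i => by show (0:ℕ) < wt (a i); have := wt_pos (a i); omega) (v := wt t') ih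
      have h3 : (∏ i, Function.update (fun i => wt (a i)) i₀ (wt t') i)
          < ∏ i, wt (a i) := h0
      have h2 : (∏ i, wt (Function.update a i₀ t' i))
          = ∏ i, Function.update (fun i => wt (a i)) i₀ (wt t') i := by
        refine Finset.prod_congr rfl fun i _ => ?_
        by_cases hi : i = i₀
        · subst hi; simp
        · rw [Function.update_of_ne hi, Function.update_of_ne hi]
      rw [h2]; omega
  | mapR_arg a i₀ t' _ ih =>
      simp only [wt]
      have h0 := prod_lt_prod_update (f := fun i => wt (a i)) i₀
        (fun i => by show (0:ℕ) < wt (a i); have := wt_pos (a i); omega) (v := wt t') ih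
      have h3 : (∏ i, Function.update (fun i => wt (a i)) i₀ (wt t') i)
          < ∏ i, wt (a i) := h0
      have h2 : (∏ i, wt (Function.update a i₀ t' i))
          = ∏ i, Function.update (fun i => wt (a i)) i₀ (wt t') i := by
        refine Finset.prod_congr rfl fun i _ => ?_
        by_cases hi : i = i₀
        · subst hi; simp
        · rw [Function.update_of_ne hi, Function.update_of_ne hi]
      rw [h2]; omega

theorem wt_step_lt {X Y : DObj m n p} {g h : DTerm Φ Ψ X Y} (s : CFStep g h) :
    wt h < wt g := by
  obtain ⟨g', h', e₁, r, e₂⟩ := s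
  rw [wt_aeq e₁, ← wt_aeq e₂]
  exact wt_raw_lt r

/-! #### canonical (right-nested) forms -/

/-- append for right-nested composites -/
def app : ∀ {X Y Z : DObj m n p}, DTerm Φ Ψ X Y → DTerm Φ Ψ Y Z → DTerm Φ Ψ X Z
  | _, _, _, .comp g₁ g₂, h => .comp g₁ (app g₂ h)
  | _, _, _, g, h => .comp g h

/-- composition of functor arguments of right-nested form, respecting variance -/
def dApp {X Y Z : DObj m n p} : (b : Bool) →
    DTerm Φ Ψ (dSrc b X Y) (dTgt b X Y) → DTerm Φ Ψ (dSrc b Y Z) (dTgt b Y Z) →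
    DTerm Φ Ψ (dSrc b X Z) (dTgt b X Z)
  | true, g, h => app g h
  | false, g, h => app h g

/-- canonical right-nested representative -/
def can : ∀ {X Y : DObj m n p}, DTerm Φ Ψ X Y → DTerm Φ Ψ X Y
  | _, _, .comp g h => app (can g) (can h)
  | _, _, .mapT a => .mapT fun i => can (a i)
  | _, _, .mapS a => .mapS fun j => can (a j)
  | _, _, .mapR a => .mapR fun l => can (a l)
  | _, _, g => g

theorem app_id {X Y : DObj m n p} (h : DTerm Φ Ψ X Y) :
    app (.id X) h = .comp (.id X) h := rfl
theorem app_comp {X Y Y' Z : DObj m n p} (g₁ : DTerm Φ Ψ X Y') (g₂ : DTerm Φ Ψ Y' Y)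
    (h : DTerm Φ Ψ Y Z) : app (.comp g₁ g₂) h = .comp g₁ (app g₂ h) := rfl

theorem app_assoc : ∀ {X Y Z W : DObj m n p} (g : DTerm Φ Ψ X Y) (h : DTerm Φ Ψ Y Z)
    (t : DTerm Φ Ψ Z W), app (app g h) t = app g (app h t)
  | _, _, _, _, .comp g₁ g₂, h, t => by
      rw [app_comp, app_comp, app_comp, app_assoc g₂ h t]
  | _, _, _, _, .f, _, _ => rfl
  | _, _, _, _, .id _, _, _ => rfl
  | _, _, _, _, .alpha _, _, _ => rfl
  | _, _, _, _, .beta _, _, _ => rfl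
  | _, _, _, _, .mapT _, _, _ => rfl
  | _, _, _, _, .mapS _, _, _ => rfl
  | _, _, _, _, .mapR _, _, _ => rfl

theorem aeq_comp_app : ∀ {X Y Z : DObj m n p} (g : DTerm Φ Ψ X Y) (h : DTerm Φ Ψ Y Z),
    AEq (.comp g h) (app g h)
  | _, _, _, .comp g₁ g₂, h =>
      AEq.trans (AEq.assoc g₁ g₂ h)
        (AEq.comp_congr (AEq.refl _) (aeq_comp_app g₂ h))
  | _, _, _, .f, _ => AEq.refl _
  | _, _, _, .id _, _ => AEq.refl _
  | _, _, _, .alpha _, _ => AEq.refl _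
  | _, _, _, .beta _, _ => AEq.refl _
  | _, _, _, .mapT _, _ => AEq.refl _
  | _, _, _, .mapS _, _ => AEq.refl _
  | _, _, _, .mapR _, _ => AEq.refl _

theorem aeq_can : ∀ {X Y : DObj m n p} (g : DTerm Φ Ψ X Y), AEq g (can g)
  | _, _, .comp g h =>
      AEq.trans (AEq.comp_congr (aeq_can g) (aeq_can h)) (aeq_comp_app _ _)
  | _, _, .mapT a => AEq.mapT_congr fun i => aeq_can (a i)
  | _, _, .mapS a => AEq.mapS_congr fun j => aeq_can (a j)
  | _, _, .mapR a => AEq.mapR_congr fun l => aeq_can (a l)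
  | _, _, .f => AEq.refl _
  | _, _, .id _ => AEq.refl _
  | _, _, .alpha _ => AEq.refl _
  | _, _, .beta _ => AEq.refl _

theorem can_eq_of_aeq {X Y : DObj m n p} {g h : DTerm Φ Ψ X Y} (e : AEq g h) :
    can g = can h := by
  induction e with
  | refl => rfl
  | symm _ ih => exact ih.symm
  | trans _ _ ih₁ ih₂ => exact ih₁.trans ih₂
  | comp_congr _ _ ih₁ ih₂ => show app _ _ = app _ _; rw [ih₁, ih₂]
  | mapT_congr _ ih => show DTerm.mapT _ = DTerm.mapT _; congr 1; exact funext ih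
  | mapS_congr _ ih => show DTerm.mapS _ = DTerm.mapS _; congr 1; exact funext ih
  | mapR_congr _ ih => show DTerm.mapR _ = DTerm.mapR _; congr 1; exact funext ih
  | assoc g h t => show app (app _ _) _ = app _ (app _ _); rw [app_assoc]

/-! #### right-nested predicate -/

/-- `g` is not a composite -/
def NotComp {X Y : DObj m n p} : DTerm Φ Ψ X Y → Prop
  | .comp _ _ => False
  | _ => True

/-- right-nested everywhere -/
inductive RN : ∀ {X Y : DObj m n p}, DTerm Φ Ψ X Y → Prop
  | f : RN .f
  | id {X} : RN (.id X)
  | alpha (W) : RN (.alpha W)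
  | beta (W) : RN (.beta W)
  | mapT {X Y : Fin m → DObj m n p}
      {a : ∀ i, DTerm Φ Ψ (dSrc (sx i) (X i) (Y i)) (dTgt (sx i) (X i) (Y i))} :
      (∀ i, RN (a i)) → RN (.mapT a)
  | mapS {X Y : Fin n → DObj m n p}
      {a : ∀ j, DTerm Φ Ψ (dSrc (sy j) (X j) (Y j)) (dTgt (sy j) (X j) (Y j))} :
      (∀ j, RN (a j)) → RN (.mapS a)
  | mapR {X Y : Fin p → DObj m n p}
      {a : ∀ l, DTerm Φ Ψ (dSrc (sz l) (X l) (Y l)) (dTgt (sz l) (X l) (Y l))} :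
      (∀ l, RN (a l)) → RN (.mapR a)
  | comp {X Y Z} {t : DTerm Φ Ψ X Y} {w : DTerm Φ Ψ Y Z} :
      NotComp t → RN t → RN w → RN (.comp t w)

theorem RN_app : ∀ {X Y Z : DObj m n p} {g : DTerm Φ Ψ X Y} {h : DTerm Φ Ψ Y Z},
    RN g → RN h → RN (app g h)
  | _, _, _, .comp g₁ g₂, h, hg, hh => by
      cases hg with
      | comp h₁ h₂ h₃ => exact RN.comp h₁ h₂ (RN_app h₃ hh)
  | _, _, _, .f, _, hg, hh => RN.comp trivial hg hh
  | _, _, _, .id _, _, hg, hh => RN.comp trivial hg hh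
  | _, _, _, .alpha _, _, hg, hh => RN.comp trivial hg hh
  | _, _, _, .beta _, _, hg, hh => RN.comp trivial hg hh
  | _, _, _, .mapT _, _, hg, hh => RN.comp trivial hg hh
  | _, _, _, .mapS _, _, hg, hh => RN.comp trivial hg hh
  | _, _, _, .mapR _, _, hg, hh => RN.comp trivial hg hh

theorem RN_dApp {X Y Z : DObj m n p} (b : Bool)
    {g : DTerm Φ Ψ (dSrc b X Y) (dTgt b X Y)} {h : DTerm Φ Ψ (dSrc b Y Z) (dTgt b Y Z)}
    (hg : RN g) (hh : RN h) : RN (dApp b g h) := by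
  cases b
  · exact RN_app hh hg
  · exact RN_app hg hh

theorem RN_can : ∀ {X Y : DObj m n p} (g : DTerm Φ Ψ X Y), RN (can g)
  | _, _, .comp g h => RN_app (RN_can g) (RN_can h)
  | _, _, .mapT a => RN.mapT fun i => RN_can (a i)
  | _, _, .mapS a => RN.mapS fun j => RN_can (a j)
  | _, _, .mapR a => RN.mapR fun l => RN_can (a l)
  | _, _, .f => RN.f
  | _, _, .id _ => RN.id
  | _, _, .alpha _ => RN.alpha _
  | _, _, .beta _ => RN.beta _

/-! #### reduction on canonical forms -/

/-- one-step reduction adapted to right-nested forms -/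
inductive CStep : ∀ {X Y : DObj m n p}, DTerm Φ Ψ X Y → DTerm Φ Ψ X Y → Prop
  | idL {X Y} (h : DTerm Φ Ψ X Y) : CStep (.comp (.id X) h) h
  | idR {X Y} (g : DTerm Φ Ψ X Y) : CStep (.comp g (.id Y)) g
  | merge2T {X Y Z : Fin m → DObj m n p}
      (a : ∀ i, DTerm Φ Ψ (dSrc (sx i) (X i) (Y i)) (dTgt (sx i) (X i) (Y i)))
      (b : ∀ i, DTerm Φ Ψ (dSrc (sx i) (Y i) (Z i)) (dTgt (sx i) (Y i) (Z i))) :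
      CStep (.comp (.mapT a) (.mapT b)) (.mapT fun i => dApp (sx i) (a i) (b i))
  | merge2S {X Y Z : Fin n → DObj m n p}
      (a : ∀ j, DTerm Φ Ψ (dSrc (sy j) (X j) (Y j)) (dTgt (sy j) (X j) (Y j)))
      (b : ∀ j, DTerm Φ Ψ (dSrc (sy j) (Y j) (Z j)) (dTgt (sy j) (Y j) (Z j))) :
      CStep (.comp (.mapS a) (.mapS b)) (.mapS fun j => dApp (sy j) (a j) (b j))
  | merge2R {X Y Z : Fin p → DObj m n p}
      (a : ∀ l, DTerm Φ Ψ (dSrc (sz l) (X l) (Y l)) (dTgt (sz l) (X l) (Y l)))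
      (b : ∀ l, DTerm Φ Ψ (dSrc (sz l) (Y l) (Z l)) (dTgt (sz l) (Y l) (Z l))) :
      CStep (.comp (.mapR a) (.mapR b)) (.mapR fun l => dApp (sz l) (a l) (b l))
  | merge3T {X Y Z : Fin m → DObj m n p} {W : DObj m n p}
      (a : ∀ i, DTerm Φ Ψ (dSrc (sx i) (X i) (Y i)) (dTgt (sx i) (X i) (Y i)))
      (b : ∀ i, DTerm Φ Ψ (dSrc (sx i) (Y i) (Z i)) (dTgt (sx i) (Y i) (Z i)))
      (w : DTerm Φ Ψ (.T Z) W) :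
      CStep (.comp (.mapT a) (.comp (.mapT b) w))
        (.comp (.mapT fun i => dApp (sx i) (a i) (b i)) w)
  | merge3S {X Y Z : Fin n → DObj m n p} {W : DObj m n p}
      (a : ∀ j, DTerm Φ Ψ (dSrc (sy j) (X j) (Y j)) (dTgt (sy j) (X j) (Y j)))
      (b : ∀ j, DTerm Φ Ψ (dSrc (sy j) (Y j) (Z j)) (dTgt (sy j) (Y j) (Z j)))
      (w : DTerm Φ Ψ (.S Z) W) :
      CStep (.comp (.mapS a) (.comp (.mapS b) w))
        (.comp (.mapS fun j => dApp (sy j) (a j) (b j)) w)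
  | merge3R {X Y Z : Fin p → DObj m n p} {W : DObj m n p}
      (a : ∀ l, DTerm Φ Ψ (dSrc (sz l) (X l) (Y l)) (dTgt (sz l) (X l) (Y l)))
      (b : ∀ l, DTerm Φ Ψ (dSrc (sz l) (Y l) (Z l)) (dTgt (sz l) (Y l) (Z l)))
      (w : DTerm Φ Ψ (.R Z) W) :
      CStep (.comp (.mapR a) (.comp (.mapR b) w))
        (.comp (.mapR fun l => dApp (sz l) (a l) (b l)) w)
  | collapseT {X : Fin m → DObj m n p}
      (a : ∀ i, DTerm Φ Ψ (dSrc (sx i) (X i) (X i)) (dTgt (sx i) (X i) (X i)))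
      (hid : ∀ i, a i = dId (X i) (sx i)) : CStep (.mapT a) (.id (.T X))
  | collapseS {X : Fin n → DObj m n p}
      (a : ∀ j, DTerm Φ Ψ (dSrc (sy j) (X j) (X j)) (dTgt (sy j) (X j) (X j)))
      (hid : ∀ j, a j = dId (X j) (sy j)) : CStep (.mapS a) (.id (.S X))
  | collapseR {X : Fin p → DObj m n p}
      (a : ∀ l, DTerm Φ Ψ (dSrc (sz l) (X l) (X l)) (dTgt (sz l) (X l) (X l)))
      (hid : ∀ l, a l = dId (X l) (sz l)) : CStep (.mapR a) (.id (.R X))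
  | head {X Y Z} {t t' : DTerm Φ Ψ X Y} (w : DTerm Φ Ψ Y Z) :
      CStep t t' → CStep (.comp t w) (.comp t' w)
  | tail {X Y Z} (t : DTerm Φ Ψ X Y) {w w' : DTerm Φ Ψ Y Z} :
      CStep w w' → CStep (.comp t w) (.comp t w')
  | argT {X Y : Fin m → DObj m n p}
      (a : ∀ i, DTerm Φ Ψ (dSrc (sx i) (X i) (Y i)) (dTgt (sx i) (X i) (Y i)))
      (i₀ : Fin m) (t' : DTerm Φ Ψ (dSrc (sx i₀) (X i₀) (Y i₀)) (dTgt (sx i₀) (X i₀) (Y i₀))) :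
      CStep (a i₀) t' → CStep (.mapT a) (.mapT (Function.update a i₀ t'))
  | argS {X Y : Fin n → DObj m n p}
      (a : ∀ j, DTerm Φ Ψ (dSrc (sy j) (X j) (Y j)) (dTgt (sy j) (X j) (Y j)))
      (j₀ : Fin n) (t' : DTerm Φ Ψ (dSrc (sy j₀) (X j₀) (Y j₀)) (dTgt (sy j₀) (X j₀) (Y j₀))) :
      CStep (a j₀) t' → CStep (.mapS a) (.mapS (Function.update a j₀ t'))
  | argR {X Y : Fin p → DObj m n p}
      (a : ∀ l, DTerm Φ Ψ (dSrc (sz l) (X l) (Y l)) (dTgt (sz l) (X l) (Y l)))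
      (l₀ : Fin p) (t' : DTerm Φ Ψ (dSrc (sz l₀) (X l₀) (Y l₀)) (dTgt (sz l₀) (X l₀) (Y l₀))) :
      CStep (a l₀) t' → CStep (.mapR a) (.mapR (Function.update a l₀ t'))

theorem not_cstep_id {X : DObj m n p} {v : DTerm Φ Ψ X X} :
    ¬ CStep (.id X) v := fun h => by cases h

/-! #### CFStep is saturated under `AEq` and closed under congruence -/

theorem cfstep_aeq_left {X Y : DObj m n p} {g g' h : DTerm Φ Ψ X Y}
    (e : AEq g' g) (s : CFStep g h) : CFStep g' h := by
  obtain ⟨u, v, e₁, r, e₂⟩ := s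
  exact ⟨u, v, e.trans e₁, r, e₂⟩

theorem cfstep_aeq_right {X Y : DObj m n p} {g h h' : DTerm Φ Ψ X Y}
    (e : AEq h h') (s : CFStep g h) : CFStep g h' := by
  obtain ⟨u, v, e₁, r, e₂⟩ := s
  exact ⟨u, v, e₁, r, e₂.trans e⟩

theorem cfstep_comp_left {X Y Z : DObj m n p} {g g' : DTerm Φ Ψ X Y}
    (h : DTerm Φ Ψ Y Z) (s : CFStep g g') : CFStep (.comp g h) (.comp g' h) := by
  obtain ⟨u, v, e₁, r, e₂⟩ := s
  exact ⟨.comp u h, .comp v h, AEq.comp_congr e₁ (AEq.refl _),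
    CFRaw.comp_left h r, AEq.comp_congr e₂ (AEq.refl _)⟩

theorem cfstep_comp_right {X Y Z : DObj m n p} (g : DTerm Φ Ψ X Y)
    {h h' : DTerm Φ Ψ Y Z} (s : CFStep h h') : CFStep (.comp g h) (.comp g h') := by
  obtain ⟨u, v, e₁, r, e₂⟩ := s
  exact ⟨.comp g u, .comp g v, AEq.comp_congr (AEq.refl _) e₁,
    CFRaw.comp_right g r, AEq.comp_congr (AEq.refl _) e₂⟩

theorem aeq_update {k : ℕ} {D : Fin k → DObj m n p} {E : Fin k → DObj m n p}
    {b : Fin k → Bool}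
    (a : ∀ i, DTerm Φ Ψ (dSrc (b i) (D i) (E i)) (dTgt (b i) (D i) (E i)))
    (i₀ : Fin k) {u v : DTerm Φ Ψ (dSrc (b i₀) (D i₀) (E i₀)) (dTgt (b i₀) (D i₀) (E i₀))}
    (e : AEq u v) (i : Fin k) :
    AEq (Function.update a i₀ u i) (Function.update a i₀ v i) := by
  by_cases hi : i = i₀
  · subst hi; simpa using e
  · rw [Function.update_of_ne hi, Function.update_of_ne hi]
    exact AEq.refl _

theorem cfstep_mapT_arg {X Y : Fin m → DObj m n p}
    (a : ∀ i, DTerm Φ Ψ (dSrc (sx i) (X i) (Y i)) (dTgt (sx i) (X i) (Y i)))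
    (i₀ : Fin m) {t' : DTerm Φ Ψ (dSrc (sx i₀) (X i₀) (Y i₀)) (dTgt (sx i₀) (X i₀) (Y i₀))}
    (s : CFStep (a i₀) t') : CFStep (.mapT a) (.mapT (Function.update a i₀ t')) := by
  obtain ⟨u, v, e₁, r, e₂⟩ := s
  refine ⟨.mapT (Function.update a i₀ u), .mapT (Function.update (Function.update a i₀ u) i₀ v),
    AEq.mapT_congr fun i => ?_, CFRaw.mapT_arg _ i₀ v (by simpa using r), AEq.mapT_congr fun i => ?_⟩
  · by_cases hi : i = i₀
    · subst hi; simpa using e₁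
    · rw [Function.update_of_ne hi]; exact AEq.refl _
  · rw [Function.update_idem]
    exact aeq_update a i₀ e₂ i

theorem cfstep_mapS_arg {X Y : Fin n → DObj m n p}
    (a : ∀ j, DTerm Φ Ψ (dSrc (sy j) (X j) (Y j)) (dTgt (sy j) (X j) (Y j)))
    (j₀ : Fin n) {t' : DTerm Φ Ψ (dSrc (sy j₀) (X j₀) (Y j₀)) (dTgt (sy j₀) (X j₀) (Y j₀))}
    (s : CFStep (a j₀) t') : CFStep (.mapS a) (.mapS (Function.update a j₀ t')) := by
  obtain ⟨u, v, e₁, r, e₂⟩ := s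
  refine ⟨.mapS (Function.update a j₀ u), .mapS (Function.update (Function.update a j₀ u) j₀ v),
    AEq.mapS_congr fun j => ?_, CFRaw.mapS_arg _ j₀ v (by simpa using r), AEq.mapS_congr fun j => ?_⟩
  · by_cases hj : j = j₀
    · subst hj; simpa using e₁
    · rw [Function.update_of_ne hj]; exact AEq.refl _
  · rw [Function.update_idem]
    exact aeq_update a j₀ e₂ j

theorem cfstep_mapR_arg {X Y : Fin p → DObj m n p}
    (a : ∀ l, DTerm Φ Ψ (dSrc (sz l) (X l) (Y l)) (dTgt (sz l) (X l) (Y l)))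
    (l₀ : Fin p) {t' : DTerm Φ Ψ (dSrc (sz l₀) (X l₀) (Y l₀)) (dTgt (sz l₀) (X l₀) (Y l₀))}
    (s : CFStep (a l₀) t') : CFStep (.mapR a) (.mapR (Function.update a l₀ t')) := by
  obtain ⟨u, v, e₁, r, e₂⟩ := s
  refine ⟨.mapR (Function.update a l₀ u), .mapR (Function.update (Function.update a l₀ u) l₀ v),
    AEq.mapR_congr fun l => ?_, CFRaw.mapR_arg _ l₀ v (by simpa using r), AEq.mapR_congr fun l => ?_⟩
  · by_cases hl : l = l₀
    · subst hl; simpa using e₁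
    · rw [Function.update_of_ne hl]; exact AEq.refl _
  · rw [Function.update_idem]
    exact aeq_update a l₀ e₂ l

theorem aeq_dComp_dApp {X Y Z : DObj m n p} (b : Bool)
    (g : DTerm Φ Ψ (dSrc b X Y) (dTgt b X Y)) (h : DTerm Φ Ψ (dSrc b Y Z) (dTgt b Y Z)) :
    AEq (dComp b g h) (dApp b g h) := by
  cases b
  · exact aeq_comp_app h g
  · exact aeq_comp_app g h

/-- realization: every `CStep` is a genuine `CFStep` -/
theorem cfstep_of_cstep {X Y : DObj m n p} {g h : DTerm Φ Ψ X Y} (s : CStep g h) :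
    CFStep g h := by
  induction s with
  | idL h => exact ⟨_, _, AEq.refl _, CFRaw.id_left h, AEq.refl _⟩
  | idR g => exact ⟨_, _, AEq.refl _, CFRaw.id_right g, AEq.refl _⟩
  | merge2T a b =>
      exact ⟨_, _, AEq.refl _, CFRaw.functT a b,
        AEq.mapT_congr fun i => aeq_dComp_dApp _ _ _⟩
  | merge2S a b =>
      exact ⟨_, _, AEq.refl _, CFRaw.functS a b,
        AEq.mapS_congr fun j => aeq_dComp_dApp _ _ _⟩
  | merge2R a b =>
      exact ⟨_, _, AEq.refl _, CFRaw.functR a b,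
        AEq.mapR_congr fun l => aeq_dComp_dApp _ _ _⟩
  | merge3T a b w =>
      exact ⟨_, _, AEq.symm (AEq.assoc (.mapT a) (.mapT b) w),
        CFRaw.comp_left w (CFRaw.functT a b),
        AEq.comp_congr (AEq.mapT_congr fun i => aeq_dComp_dApp _ _ _) (AEq.refl _)⟩
  | merge3S a b w =>
      exact ⟨_, _, AEq.symm (AEq.assoc (.mapS a) (.mapS b) w),
        CFRaw.comp_left w (CFRaw.functS a b),
        AEq.comp_congr (AEq.mapS_congr fun j => aeq_dComp_dApp _ _ _) (AEq.refl _)⟩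
  | merge3R a b w =>
      exact ⟨_, _, AEq.symm (AEq.assoc (.mapR a) (.mapR b) w),
        CFRaw.comp_left w (CFRaw.functR a b),
        AEq.comp_congr (AEq.mapR_congr fun l => aeq_dComp_dApp _ _ _) (AEq.refl _)⟩
  | collapseT a hid =>
      have : a = fun i => dId _ (sx i) := funext hid
      subst this
      exact ⟨_, _, AEq.refl _, CFRaw.functT_id _, AEq.refl _⟩
  | collapseS a hid =>
      have : a = fun j => dId _ (sy j) := funext hid
      subst this
      exact ⟨_, _, AEq.refl _, CFRaw.functS_id _, AEq.refl _⟩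
  | collapseR a hid =>
      have : a = fun l => dId _ (sz l) := funext hid
      subst this
      exact ⟨_, _, AEq.refl _, CFRaw.functR_id _, AEq.refl _⟩
  | head w _ ih => exact cfstep_comp_left w ih
  | tail t _ ih => exact cfstep_comp_right t ih
  | argT a i₀ t' _ ih => exact cfstep_mapT_arg a i₀ ih
  | argS a j₀ t' _ ih => exact cfstep_mapS_arg a j₀ ih
  | argR a l₀ t' _ ih => exact cfstep_mapR_arg a l₀ ih

/-! #### steps and `app` -/

theorem cstep_app_id : ∀ {X Y : DObj m n p} (g : DTerm Φ Ψ X Y),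
    CStep (app g (.id Y)) g
  | _, _, .comp g₁ g₂ => by
      rw [app_comp]
      exact CStep.tail g₁ (cstep_app_id g₂)
  | _, _, .f => CStep.idR _
  | _, _, .id _ => CStep.idR _
  | _, _, .alpha _ => CStep.idR _
  | _, _, .beta _ => CStep.idR _
  | _, _, .mapT _ => CStep.idR _
  | _, _, .mapS _ => CStep.idR _
  | _, _, .mapR _ => CStep.idR _

theorem cstep_appL {X Y Z : DObj m n p} {g g' : DTerm Φ Ψ X Y} (h : DTerm Φ Ψ Y Z)
    (s : CStep g g') : RN g → CStep (app g h) (app g' h) := by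
  induction s with
  | idL w => intro hg; exact CStep.idL _
  | idR t =>
      intro hg
      cases hg with
      | comp h₁ h₂ h₃ =>
        have hs : CStep (.comp t (.comp (.id _) h)) (.comp t h) := CStep.tail t (CStep.idL h)
        cases t with
        | comp t₁ t₂ => exact absurd h₁ (by simp [NotComp])
        | f => exact hs
        | id => exact hs
        | alpha => exact hs
        | beta => exact hs
        | mapT => exact hs
        | mapS => exact hs
        | mapR => exact hs
  | merge2T a b => intro _; exact CStep.merge3T a b h
  | merge2S a b => intro _; exact CStep.merge3S a b h
  | merge2R a b => intro _; exact CStep.merge3R a b h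
  | merge3T a b w => intro _; exact CStep.merge3T a b (app w h)
  | merge3S a b w => intro _; exact CStep.merge3S a b (app w h)
  | merge3R a b w => intro _; exact CStep.merge3R a b (app w h)
  | collapseT a hid => intro _; exact CStep.head h (CStep.collapseT a hid)
  | collapseS a hid => intro _; exact CStep.head h (CStep.collapseS a hid)
  | collapseR a hid => intro _; exact CStep.head h (CStep.collapseR a hid)
  | head w s ih => intro _; exact CStep.head _ s
  | tail t s ih =>
      intro hg
      cases hg with
      | comp h₁ h₂ h₃ => exact CStep.tail t (ih _ h₃)
  | argT a i₀ t' s => intro _; exact CStep.head h (CStep.argT a i₀ t' s)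
  | argS a j₀ t' s => intro _; exact CStep.head h (CStep.argS a j₀ t' s)
  | argR a l₀ t' s => intro _; exact CStep.head h (CStep.argR a l₀ t' s)

theorem cstep_appR : ∀ {X Y Z : DObj m n p} (g : DTerm Φ Ψ X Y)
    {h h' : DTerm Φ Ψ Y Z}, CStep h h' → CStep (app g h) (app g h')
  | _, _, _, .comp g₁ g₂, _, _, s => by
      rw [app_comp, app_comp]
      exact CStep.tail g₁ (cstep_appR g₂ s)
  | _, _, _, .f, _, _, s => CStep.tail _ s
  | _, _, _, .id _, _, _, s => CStep.tail _ s
  | _, _, _, .alpha _, _, _, s => CStep.tail _ s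
  | _, _, _, .beta _, _, _, s => CStep.tail _ s
  | _, _, _, .mapT _, _, _, s => CStep.tail _ s
  | _, _, _, .mapS _, _, _, s => CStep.tail _ s
  | _, _, _, .mapR _, _, _, s => CStep.tail _ s

/-! #### projection of `CFRaw` steps onto canonical forms -/

theorem can_update {k : ℕ} {D E : Fin k → DObj m n p} {b : Fin k → Bool}
    (a : ∀ i, DTerm Φ Ψ (dSrc (b i) (D i) (E i)) (dTgt (b i) (D i) (E i)))
    (i₀ : Fin k) (t' : DTerm Φ Ψ (dSrc (b i₀) (D i₀) (E i₀)) (dTgt (b i₀) (D i₀) (E i₀))) :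
    (fun i => can (Function.update a i₀ t' i))
      = Function.update (fun i => can (a i)) i₀ (can t') := by
  funext i
  by_cases hi : i = i₀
  · subst hi; simp
  · rw [Function.update_of_ne hi, Function.update_of_ne hi]

theorem can_dId {X : DObj m n p} (b : Bool) :
    can (dId (Φ := Φ) (Ψ := Ψ) X b) = dId X b := by cases b <;> rfl

theorem can_dComp {X Y Z : DObj m n p} (b : Bool)
    (g : DTerm Φ Ψ (dSrc b X Y) (dTgt b X Y)) (h : DTerm Φ Ψ (dSrc b Y Z) (dTgt b Y Z)) :
    can (dComp b g h) = dApp b (can g) (can h) := by cases b <;> rfl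

theorem cstep_can_of_raw {X Y : DObj m n p} {g h : DTerm Φ Ψ X Y} (r : CFRaw g h) :
    CStep (can g) (can h) := by
  induction r with
  | id_left g => exact CStep.idL (can g)
  | id_right g => exact cstep_app_id (can g)
  | functT a b =>
      have e : (DTerm.mapT (Φ := Φ) (Ψ := Ψ) fun i => can (dComp (sx i) (a i) (b i)))
          = .mapT fun i => dApp (sx i) (can (a i)) (can (b i)) := by
        congr 1; funext i; exact can_dComp _ _ _
      show CStep (.comp (.mapT fun i => can (a i)) (.mapT fun i => can (b i)))
        (.mapT fun i => can (dComp (sx i) (a i) (b i)))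
      rw [e]
      exact CStep.merge2T _ _
  | functS a b =>
      have e : (DTerm.mapS (Φ := Φ) (Ψ := Ψ) fun j => can (dComp (sy j) (a j) (b j)))
          = .mapS fun j => dApp (sy j) (can (a j)) (can (b j)) := by
        congr 1; funext j; exact can_dComp _ _ _
      show CStep (.comp (.mapS fun j => can (a j)) (.mapS fun j => can (b j)))
        (.mapS fun j => can (dComp (sy j) (a j) (b j)))
      rw [e]
      exact CStep.merge2S _ _
  | functR a b =>
      have e : (DTerm.mapR (Φ := Φ) (Ψ := Ψ) fun l => can (dComp (sz l) (a l) (b l)))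
          = .mapR fun l => dApp (sz l) (can (a l)) (can (b l)) := by
        congr 1; funext l; exact can_dComp _ _ _
      show CStep (.comp (.mapR fun l => can (a l)) (.mapR fun l => can (b l)))
        (.mapR fun l => can (dComp (sz l) (a l) (b l)))
      rw [e]
      exact CStep.merge2R _ _
  | functT_id X => exact CStep.collapseT _ fun i => can_dId (sx i)
  | functS_id X => exact CStep.collapseS _ fun j => can_dId (sy j)
  | functR_id X => exact CStep.collapseR _ fun l => can_dId (sz l)
  | comp_left h _ ih => exact cstep_appL (can h) ih (RN_can _)
  | comp_right g _ ih => exact cstep_appR (can g) ih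
  | mapT_arg a i₀ t' _ ih =>
      show CStep (.mapT fun i => can (a i)) (.mapT fun i => can (Function.update a i₀ t' i))
      rw [can_update]
      exact CStep.argT _ i₀ _ ih
  | mapS_arg a j₀ t' _ ih =>
      show CStep (.mapS fun j => can (a j)) (.mapS fun j => can (Function.update a j₀ t' j))
      rw [can_update]
      exact CStep.argS _ j₀ _ ih
  | mapR_arg a l₀ t' _ ih =>
      show CStep (.mapR fun l => can (a l)) (.mapR fun l => can (Function.update a l₀ t' l))
      rw [can_update]
      exact CStep.argR _ l₀ _ ih

theorem cstep_can_of_cfstep {X Y : DObj m n p} {g h : DTerm Φ Ψ X Y} (s : CFStep g h) :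
    CStep (can g) (can h) := by
  obtain ⟨u, v, e₁, r, e₂⟩ := s
  rw [can_eq_of_aeq e₁, ← can_eq_of_aeq e₂]
  exact cstep_can_of_raw r

/-! #### multi-step congruences -/

/-- noncomposites stay noncomposites under `CStep` -/
theorem notComp_cstep {X Y : DObj m n p} {t t' : DTerm Φ Ψ X Y}
    (h : NotComp t) (s : CStep t t') : NotComp t' := by
  cases s <;> first | exact trivial | exact absurd h (by simp [NotComp])

/-- `CStep` preserves right-nestedness -/
theorem RN_cstep {X Y : DObj m n p} {g g' : DTerm Φ Ψ X Y}
    (s : CStep g g') : RN g → RN g' := by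
  induction s with
  | idL h => intro hg; cases hg with | comp _ _ h₃ => exact h₃
  | idR g => intro hg; cases hg with | comp _ h₂ _ => exact h₂
  | merge2T a b =>
      intro hg
      cases hg with
      | comp _ h₂ h₃ =>
        cases h₂ with | mapT ha =>
        cases h₃ with | mapT hb =>
        exact RN.mapT fun i => RN_dApp _ (ha i) (hb i)
  | merge2S a b =>
      intro hg
      cases hg with
      | comp _ h₂ h₃ =>
        cases h₂ with | mapS ha =>
        cases h₃ with | mapS hb =>
        exact RN.mapS fun j => RN_dApp _ (ha j) (hb j)
  | merge2R a b =>
      intro hg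
      cases hg with
      | comp _ h₂ h₃ =>
        cases h₂ with | mapR ha =>
        cases h₃ with | mapR hb =>
        exact RN.mapR fun l => RN_dApp _ (ha l) (hb l)
  | merge3T a b w =>
      intro hg
      cases hg with
      | comp _ h₂ h₃ =>
        cases h₂ with | mapT ha =>
        cases h₃ with
        | comp _ h₅ h₆ =>
          cases h₅ with | mapT hb =>
          exact RN.comp trivial (RN.mapT fun i => RN_dApp _ (ha i) (hb i)) h₆
  | merge3S a b w =>
      intro hg
      cases hg with
      | comp _ h₂ h₃ =>
        cases h₂ with | mapS ha =>
        cases h₃ with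
        | comp _ h₅ h₆ =>
          cases h₅ with | mapS hb =>
          exact RN.comp trivial (RN.mapS fun j => RN_dApp _ (ha j) (hb j)) h₆
  | merge3R a b w =>
      intro hg
      cases hg with
      | comp _ h₂ h₃ =>
        cases h₂ with | mapR ha =>
        cases h₃ with
        | comp _ h₅ h₆ =>
          cases h₅ with | mapR hb =>
          exact RN.comp trivial (RN.mapR fun l => RN_dApp _ (ha l) (hb l)) h₆
  | collapseT a hid => intro _; exact RN.id
  | collapseS a hid => intro _; exact RN.id
  | collapseR a hid => intro _; exact RN.id
  | head w s ih =>
      intro hg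
      cases hg with
      | comp h₁ h₂ h₃ => exact RN.comp (notComp_cstep h₁ s) (ih h₂) h₃
  | tail t s ih =>
      intro hg
      cases hg with
      | comp h₁ h₂ h₃ => exact RN.comp h₁ h₂ (ih h₃)
  | argT a i₀ t' s ih =>
      intro hg
      cases hg with
      | mapT ha =>
        refine RN.mapT fun i => ?_
        by_cases hi : i = i₀
        · subst hi; rw [Function.update_self]; exact ih (ha _)
        · rw [Function.update_of_ne hi]; exact ha i
  | argS a j₀ t' s ih =>
      intro hg
      cases hg with
      | mapS ha =>
        refine RN.mapS fun j => ?_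
        by_cases hj : j = j₀
        · subst hj; rw [Function.update_self]; exact ih (ha _)
        · rw [Function.update_of_ne hj]; exact ha j
  | argR a l₀ t' s ih =>
      intro hg
      cases hg with
      | mapR ha =>
        refine RN.mapR fun l => ?_
        by_cases hl : l = l₀
        · subst hl; rw [Function.update_self]; exact ih (ha _)
        · rw [Function.update_of_ne hl]; exact ha l

/-- many-step reduction on canonical forms -/
abbrev CStar {X Y : DObj m n p} (g h : DTerm Φ Ψ X Y) : Prop :=
  Relation.ReflTransGen CStep g h

theorem cstar_head {X Y Z : DObj m n p} {t t' : DTerm Φ Ψ X Y} (w : DTerm Φ Ψ Y Z)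
    (s : CStar t t') : CStar (.comp t w) (.comp t' w) :=
  Relation.ReflTransGen.lift (fun x => DTerm.comp x w) (fun _ _ h => CStep.head w h) _ _ s

theorem cstar_tail {X Y Z : DObj m n p} (t : DTerm Φ Ψ X Y) {w w' : DTerm Φ Ψ Y Z}
    (s : CStar w w') : CStar (.comp t w) (.comp t w') :=
  Relation.ReflTransGen.lift (fun x => DTerm.comp t x) (fun _ _ h => CStep.tail t h) _ _ s

theorem cstar_argT {X Y : Fin m → DObj m n p}
    (a : ∀ i, DTerm Φ Ψ (dSrc (sx i) (X i) (Y i)) (dTgt (sx i) (X i) (Y i)))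
    (i₀ : Fin m) {t' : DTerm Φ Ψ (dSrc (sx i₀) (X i₀) (Y i₀)) (dTgt (sx i₀) (X i₀) (Y i₀))}
    (s : CStar (a i₀) t') : CStar (.mapT a) (.mapT (Function.update a i₀ t')) := by
  have key : ∀ {u v : DTerm Φ Ψ (dSrc (sx i₀) (X i₀) (Y i₀)) (dTgt (sx i₀) (X i₀) (Y i₀))},
      CStar u v → CStar (.mapT (Function.update a i₀ u)) (.mapT (Function.update a i₀ v)) := by
    intro u v huv
    refine Relation.ReflTransGen.lift (fun x => DTerm.mapT (Function.update a i₀ x))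
      (fun x y hxy => ?_) _ _ huv
    have := CStep.argT (Function.update a i₀ x) i₀ (by simpa using y) (by simpa using hxy)
    simpa [Function.update_idem] using this
  have h0 : DTerm.mapT (Φ := Φ) (Ψ := Ψ) a = .mapT (Function.update a i₀ (a i₀)) := by
    rw [Function.update_eq_self]
  rw [h0]
  exact key s

theorem cstar_argS {X Y : Fin n → DObj m n p}
    (a : ∀ j, DTerm Φ Ψ (dSrc (sy j) (X j) (Y j)) (dTgt (sy j) (X j) (Y j)))
    (j₀ : Fin n) {t' : DTerm Φ Ψ (dSrc (sy j₀) (X j₀) (Y j₀)) (dTgt (sy j₀) (X j₀) (Y j₀))}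
    (s : CStar (a j₀) t') : CStar (.mapS a) (.mapS (Function.update a j₀ t')) := by
  have key : ∀ {u v : DTerm Φ Ψ (dSrc (sy j₀) (X j₀) (Y j₀)) (dTgt (sy j₀) (X j₀) (Y j₀))},
      CStar u v → CStar (.mapS (Function.update a j₀ u)) (.mapS (Function.update a j₀ v)) := by
    intro u v huv
    refine Relation.ReflTransGen.lift (fun x => DTerm.mapS (Function.update a j₀ x))
      (fun x y hxy => ?_) _ _ huv
    have := CStep.argS (Function.update a j₀ x) j₀ (by simpa using y) (by simpa using hxy)
    simpa [Function.update_idem] using this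
  have h0 : DTerm.mapS (Φ := Φ) (Ψ := Ψ) a = .mapS (Function.update a j₀ (a j₀)) := by
    rw [Function.update_eq_self]
  rw [h0]
  exact key s

theorem cstar_argR {X Y : Fin p → DObj m n p}
    (a : ∀ l, DTerm Φ Ψ (dSrc (sz l) (X l) (Y l)) (dTgt (sz l) (X l) (Y l)))
    (l₀ : Fin p) {t' : DTerm Φ Ψ (dSrc (sz l₀) (X l₀) (Y l₀)) (dTgt (sz l₀) (X l₀) (Y l₀))}
    (s : CStar (a l₀) t') : CStar (.mapR a) (.mapR (Function.update a l₀ t')) := by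
  have key : ∀ {u v : DTerm Φ Ψ (dSrc (sz l₀) (X l₀) (Y l₀)) (dTgt (sz l₀) (X l₀) (Y l₀))},
      CStar u v → CStar (.mapR (Function.update a l₀ u)) (.mapR (Function.update a l₀ v)) := by
    intro u v huv
    refine Relation.ReflTransGen.lift (fun x => DTerm.mapR (Function.update a l₀ x))
      (fun x y hxy => ?_) _ _ huv
    have := CStep.argR (Function.update a l₀ x) l₀ (by simpa using y) (by simpa using hxy)
    simpa [Function.update_idem] using this
  have h0 : DTerm.mapR (Φ := Φ) (Ψ := Ψ) a = .mapR (Function.update a l₀ (a l₀)) := by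
    rw [Function.update_eq_self]
  rw [h0]
  exact key s

theorem cstar_mapT {X Y : Fin m → DObj m n p}
    {a b : ∀ i, DTerm Φ Ψ (dSrc (sx i) (X i) (Y i)) (dTgt (sx i) (X i) (Y i))}
    (h : ∀ i, CStar (a i) (b i)) : CStar (.mapT a) (.mapT b) := by
  classical
  have key : ∀ s : Finset (Fin m),
      CStar (DTerm.mapT (Φ := Φ) (Ψ := Ψ) a) (.mapT fun i => if i ∈ s then b i else a i) := by
    intro s
    induction s using Finset.induction with
    | empty => simpa using Relation.ReflTransGen.refl
    | @insert j s hj ihs =>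
        refine ihs.trans ?_
        have step := cstar_argT (fun i => if i ∈ s then b i else a i) j
          (t' := b j) (by simpa [hj] using h j)
        have e : Function.update (fun i => if i ∈ s then b i else a i) j (b j)
            = fun i => if i ∈ insert j s then b i else a i := by
          funext i
          by_cases hi : i = j
          · subst hi; simp
          · rw [Function.update_of_ne hi]; simp [hi]
        rwa [e] at step
  have := key Finset.univ
  simpa using this

theorem cstar_mapS {X Y : Fin n → DObj m n p}
    {a b : ∀ j, DTerm Φ Ψ (dSrc (sy j) (X j) (Y j)) (dTgt (sy j) (X j) (Y j))}
    (h : ∀ j, CStar (a j) (b j)) : CStar (.mapS a) (.mapS b) := by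
  classical
  have key : ∀ s : Finset (Fin n),
      CStar (DTerm.mapS (Φ := Φ) (Ψ := Ψ) a) (.mapS fun j => if j ∈ s then b j else a j) := by
    intro s
    induction s using Finset.induction with
    | empty => simpa using Relation.ReflTransGen.refl
    | @insert j s hj ihs =>
        refine ihs.trans ?_
        have step := cstar_argS (fun i => if i ∈ s then b i else a i) j
          (t' := b j) (by simpa [hj] using h j)
        have e : Function.update (fun i => if i ∈ s then b i else a i) j (b j)
            = fun i => if i ∈ insert j s then b i else a i := by
          funext i
          by_cases hi : i = j
          · subst hi; simp
          · rw [Function.update_of_ne hi]; simp [hi]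
        rwa [e] at step
  have := key Finset.univ
  simpa using this

theorem cstar_mapR {X Y : Fin p → DObj m n p}
    {a b : ∀ l, DTerm Φ Ψ (dSrc (sz l) (X l) (Y l)) (dTgt (sz l) (X l) (Y l))}
    (h : ∀ l, CStar (a l) (b l)) : CStar (.mapR a) (.mapR b) := by
  classical
  have key : ∀ s : Finset (Fin p),
      CStar (DTerm.mapR (Φ := Φ) (Ψ := Ψ) a) (.mapR fun l => if l ∈ s then b l else a l) := by
    intro s
    induction s using Finset.induction with
    | empty => simpa using Relation.ReflTransGen.refl
    | @insert j s hj ihs =>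
        refine ihs.trans ?_
        have step := cstar_argR (fun i => if i ∈ s then b i else a i) j
          (t' := b j) (by simpa [hj] using h j)
        have e : Function.update (fun i => if i ∈ s then b i else a i) j (b j)
            = fun i => if i ∈ insert j s then b i else a i := by
          funext i
          by_cases hi : i = j
          · subst hi; simp
          · rw [Function.update_of_ne hi]; simp [hi]
        rwa [e] at step
  have := key Finset.univ
  simpa using this

/-! #### `dApp` interaction lemmas -/

theorem dApp_congr_left {X Y Z : DObj m n p} {b : Bool}
    {u u' : DTerm Φ Ψ (dSrc b X Y) (dTgt b X Y)}
    (h : DTerm Φ Ψ (dSrc b Y Z) (dTgt b Y Z)) (hRN : RN u) (s : CStep u u') :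
    CStep (dApp b u h) (dApp b u' h) := by
  cases b
  · exact cstep_appR h s
  · exact cstep_appL h s hRN

theorem dApp_congr_right {X Y Z : DObj m n p} {b : Bool}
    (u : DTerm Φ Ψ (dSrc b X Y) (dTgt b X Y))
    {h h' : DTerm Φ Ψ (dSrc b Y Z) (dTgt b Y Z)} (hRN : RN h) (s : CStep h h') :
    CStep (dApp b u h) (dApp b u h') := by
  cases b
  · exact cstep_appL u s hRN
  · exact cstep_appR u s

theorem dApp_id_left {X Y : DObj m n p} (b : Bool)
    (h : DTerm Φ Ψ (dSrc b X Y) (dTgt b X Y)) :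
    CStep (dApp b (dId X b) h) h := by
  cases b
  · exact cstep_app_id h
  · exact CStep.idL h

theorem dApp_id_right {X Y : DObj m n p} (b : Bool)
    (g : DTerm Φ Ψ (dSrc b X Y) (dTgt b X Y)) :
    CStep (dApp b g (dId Y b)) g := by
  cases b
  · exact CStep.idL g
  · exact cstep_app_id g

theorem dApp_assoc {X Y Z W : DObj m n p} (b : Bool)
    (g : DTerm Φ Ψ (dSrc b X Y) (dTgt b X Y)) (h : DTerm Φ Ψ (dSrc b Y Z) (dTgt b Y Z))
    (t : DTerm Φ Ψ (dSrc b Z W) (dTgt b Z W)) :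
    dApp b (dApp b g h) t = dApp b g (dApp b h t) := by
  cases b
  · exact (app_assoc t h g).symm
  · exact app_assoc g h t

/-! #### weight inequalities for subterms -/

theorem wt_lt_head {X Y Z : DObj m n p} (t : DTerm Φ Ψ X Y) (w : DTerm Φ Ψ Y Z) :
    wt t < wt (.comp t w) := by
  have h1 := wt_pos t; have h2 := wt_pos w
  show wt t < wt t * wt w
  calc wt t = wt t * 1 := (Nat.mul_one _).symm
  _ < wt t * wt w := Nat.mul_lt_mul_of_le_of_lt (le_refl _) (by omega) (by omega)

theorem wt_lt_tail {X Y Z : DObj m n p} (t : DTerm Φ Ψ X Y) (w : DTerm Φ Ψ Y Z) :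
    wt w < wt (.comp t w) := by
  have h1 := wt_pos t; have h2 := wt_pos w
  show wt w < wt t * wt w
  calc wt w = 1 * wt w := (Nat.one_mul _).symm
  _ < wt t * wt w := Nat.mul_lt_mul_of_lt_of_le (by omega) (le_refl _) (by omega)

theorem wt_lt_argT {X Y : Fin m → DObj m n p}
    (a : ∀ i, DTerm Φ Ψ (dSrc (sx i) (X i) (Y i)) (dTgt (sx i) (X i) (Y i))) (i₀ : Fin m) :
    wt (a i₀) < wt (.mapT a) := by
  show wt (a i₀) < 2 * (∏ i, wt (a i)) + 1
  have h1 : wt (a i₀) ≤ ∏ i, wt (a i) := by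
    rw [← Finset.prod_erase_mul _ _ (Finset.mem_univ i₀)]
    have : 0 < ∏ i ∈ Finset.univ.erase i₀, wt (a i) :=
      Finset.prod_pos fun i _ => by have := wt_pos (a i); omega
    calc wt (a i₀) = 1 * wt (a i₀) := (Nat.one_mul _).symm
    _ ≤ _ := Nat.mul_le_mul (by omega) (le_refl _)
  omega

theorem wt_lt_argS {X Y : Fin n → DObj m n p}
    (a : ∀ j, DTerm Φ Ψ (dSrc (sy j) (X j) (Y j)) (dTgt (sy j) (X j) (Y j))) (j₀ : Fin n) :
    wt (a j₀) < wt (.mapS a) := by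
  show wt (a j₀) < 2 * (∏ j, wt (a j)) + 1
  have h1 : wt (a j₀) ≤ ∏ j, wt (a j) := by
    rw [← Finset.prod_erase_mul _ _ (Finset.mem_univ j₀)]
    have : 0 < ∏ j ∈ Finset.univ.erase j₀, wt (a j) :=
      Finset.prod_pos fun j _ => by have := wt_pos (a j); omega
    calc wt (a j₀) = 1 * wt (a j₀) := (Nat.one_mul _).symm
    _ ≤ _ := Nat.mul_le_mul (by omega) (le_refl _)
  omega

theorem wt_lt_argR {X Y : Fin p → DObj m n p}
    (a : ∀ l, DTerm Φ Ψ (dSrc (sz l) (X l) (Y l)) (dTgt (sz l) (X l) (Y l))) (l₀ : Fin p) :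
    wt (a l₀) < wt (.mapR a) := by
  show wt (a l₀) < 2 * (∏ l, wt (a l)) + 1
  have h1 : wt (a l₀) ≤ ∏ l, wt (a l) := by
    rw [← Finset.prod_erase_mul _ _ (Finset.mem_univ l₀)]
    have : 0 < ∏ l ∈ Finset.univ.erase l₀, wt (a l) :=
      Finset.prod_pos fun l _ => by have := wt_pos (a l); omega
    calc wt (a l₀) = 1 * wt (a l₀) := (Nat.one_mul _).symm
    _ ≤ _ := Nat.mul_le_mul (by omega) (le_refl _)
  omega

theorem joinH1T {X Y Z : Fin m → DObj m n p}
    (A : ∀ i, DTerm Φ Ψ (dSrc (sx i) (X i) (Y i)) (dTgt (sx i) (X i) (Y i)))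
    (B : ∀ i, DTerm Φ Ψ (dSrc (sx i) (Y i) (Z i)) (dTgt (sx i) (Y i) (Z i)))
    {t' : DTerm Φ Ψ (.T X) (.T Y)} (hA : ∀ i, RN (A i))
    (s : CStep (.mapT A) t') :
    ∃ c, CStar (.mapT fun i => dApp (sx i) (A i) (B i)) c ∧
      CStar (.comp t' (.mapT B)) c := by
  cases s with
  | argT _ i₀ u' s' =>
      refine ⟨.mapT fun i => dApp (sx i) (Function.update A i₀ u' i) (B i), ?_, ?_⟩
      · have step := CStep.argT (fun i => dApp (sx i) (A i) (B i)) i₀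
          (dApp (sx i₀) u' (B i₀)) (dApp_congr_left (B i₀) (hA i₀) s')
        have e : Function.update (fun i => dApp (sx i) (A i) (B i)) i₀ (dApp (sx i₀) u' (B i₀))
            = fun i => dApp (sx i) (Function.update A i₀ u' i) (B i) := by
          funext i
          by_cases hi : i = i₀
          · subst hi; simp
          · rw [Function.update_of_ne hi, Function.update_of_ne hi]
        rw [e] at step
        exact Relation.ReflTransGen.single step
      · exact Relation.ReflTransGen.single (CStep.merge2T _ _)
  | collapseT _ hid =>
      refine ⟨.mapT B, ?_, Relation.ReflTransGen.single (CStep.idL _)⟩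
      refine cstar_mapT fun i => ?_
      rw [hid i]
      exact Relation.ReflTransGen.single (dApp_id_left _ _)

theorem joinH2T {X Y Z : Fin m → DObj m n p}
    (A : ∀ i, DTerm Φ Ψ (dSrc (sx i) (X i) (Y i)) (dTgt (sx i) (X i) (Y i)))
    (B : ∀ i, DTerm Φ Ψ (dSrc (sx i) (Y i) (Z i)) (dTgt (sx i) (Y i) (Z i)))
    {t' : DTerm Φ Ψ (.T Y) (.T Z)} (hB : ∀ i, RN (B i))
    (s : CStep (.mapT B) t') :
    ∃ c, CStar (.mapT fun i => dApp (sx i) (A i) (B i)) c ∧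
      CStar (.comp (.mapT A) t') c := by
  cases s with
  | argT _ i₀ u' s' =>
      refine ⟨.mapT fun i => dApp (sx i) (A i) (Function.update B i₀ u' i), ?_, ?_⟩
      · have step := CStep.argT (fun i => dApp (sx i) (A i) (B i)) i₀
          (dApp (sx i₀) (A i₀) u') (dApp_congr_right (A i₀) (hB i₀) s')
        have e : Function.update (fun i => dApp (sx i) (A i) (B i)) i₀ (dApp (sx i₀) (A i₀) u')
            = fun i => dApp (sx i) (A i) (Function.update B i₀ u' i) := by
          funext i
          by_cases hi : i = i₀
          · subst hi; simp
          · rw [Function.update_of_ne hi, Function.update_of_ne hi]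
        rw [e] at step
        exact Relation.ReflTransGen.single step
      · exact Relation.ReflTransGen.single (CStep.merge2T _ _)
  | collapseT _ hid =>
      refine ⟨.mapT A, ?_, Relation.ReflTransGen.single (CStep.idR _)⟩
      refine cstar_mapT fun i => ?_
      rw [hid i]
      exact Relation.ReflTransGen.single (dApp_id_right _ _)

theorem joinH3T {X Y Z : Fin m → DObj m n p} {W : DObj m n p}
    (A : ∀ i, DTerm Φ Ψ (dSrc (sx i) (X i) (Y i)) (dTgt (sx i) (X i) (Y i)))
    (B : ∀ i, DTerm Φ Ψ (dSrc (sx i) (Y i) (Z i)) (dTgt (sx i) (Y i) (Z i)))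
    (w : DTerm Φ Ψ (.T Z) W)
    {t' : DTerm Φ Ψ (.T X) (.T Y)} (hA : ∀ i, RN (A i))
    (s : CStep (.mapT A) t') :
    ∃ c, CStar (.comp (.mapT fun i => dApp (sx i) (A i) (B i)) w) c ∧
      CStar (.comp t' (.comp (.mapT B) w)) c := by
  cases s with
  | argT _ i₀ u' s' =>
      refine ⟨.comp (.mapT fun i => dApp (sx i) (Function.update A i₀ u' i) (B i)) w, ?_, ?_⟩
      · have step := CStep.argT (fun i => dApp (sx i) (A i) (B i)) i₀
          (dApp (sx i₀) u' (B i₀)) (dApp_congr_left (B i₀) (hA i₀) s')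
        have e : Function.update (fun i => dApp (sx i) (A i) (B i)) i₀ (dApp (sx i₀) u' (B i₀))
            = fun i => dApp (sx i) (Function.update A i₀ u' i) (B i) := by
          funext i
          by_cases hi : i = i₀
          · subst hi; simp
          · rw [Function.update_of_ne hi, Function.update_of_ne hi]
        rw [e] at step
        exact Relation.ReflTransGen.single (CStep.head w step)
      · exact Relation.ReflTransGen.single (CStep.merge3T _ _ w)
  | collapseT _ hid =>
      refine ⟨.comp (.mapT B) w, ?_, Relation.ReflTransGen.single (CStep.idL _)⟩
      refine cstar_head w (cstar_mapT fun i => ?_)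
      rw [hid i]
      exact Relation.ReflTransGen.single (dApp_id_left _ _)

theorem joinH4T {X Y Z : Fin m → DObj m n p} {W : DObj m n p}
    (A : ∀ i, DTerm Φ Ψ (dSrc (sx i) (X i) (Y i)) (dTgt (sx i) (X i) (Y i)))
    (B : ∀ i, DTerm Φ Ψ (dSrc (sx i) (Y i) (Z i)) (dTgt (sx i) (Y i) (Z i)))
    (w : DTerm Φ Ψ (.T Z) W)
    {t' : DTerm Φ Ψ (.T Y) W} (hA : ∀ i, RN (A i)) (hB : ∀ i, RN (B i)) (hw : RN w)
    (s : CStep (.comp (.mapT B) w) t') :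
    ∃ c, CStar (.comp (.mapT fun i => dApp (sx i) (A i) (B i)) w) c ∧
      CStar (.comp (.mapT A) t') c := by
  cases s with
  | idR =>
      exact ⟨.mapT fun i => dApp (sx i) (A i) (B i),
        Relation.ReflTransGen.single (CStep.idR _),
        Relation.ReflTransGen.single (CStep.merge2T _ _)⟩
  | merge2T _ C =>
      refine ⟨.mapT fun i => dApp (sx i) (dApp (sx i) (A i) (B i)) (C i),
        Relation.ReflTransGen.single (CStep.merge2T _ _), ?_⟩
      have e : (DTerm.mapT (Φ := Φ) (Ψ := Ψ)
            fun i => dApp (sx i) (dApp (sx i) (A i) (B i)) (C i))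
          = .mapT fun i => dApp (sx i) (A i) (dApp (sx i) (B i) (C i)) := by
        congr 1; funext i; exact dApp_assoc _ _ _ _
      rw [e]
      exact Relation.ReflTransGen.single (CStep.merge2T _ _)
  | merge3T _ C w' =>
      refine ⟨.comp (.mapT fun i => dApp (sx i) (dApp (sx i) (A i) (B i)) (C i)) w',
        Relation.ReflTransGen.single (CStep.merge3T _ _ w'), ?_⟩
      have e : (DTerm.mapT (Φ := Φ) (Ψ := Ψ)
            fun i => dApp (sx i) (dApp (sx i) (A i) (B i)) (C i))
          = .mapT fun i => dApp (sx i) (A i) (dApp (sx i) (B i) (C i)) := by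
        congr 1; funext i; exact dApp_assoc _ _ _ _
      rw [e]
      exact Relation.ReflTransGen.single (CStep.merge3T _ _ w')
  | head _ s' =>
      cases s' with
      | argT _ i₀ u' s'' =>
          refine ⟨.comp (.mapT fun i => dApp (sx i) (A i) (Function.update B i₀ u' i)) w,
            ?_, Relation.ReflTransGen.single (CStep.merge3T _ _ w)⟩
          have step := CStep.argT (fun i => dApp (sx i) (A i) (B i)) i₀
            (dApp (sx i₀) (A i₀) u') (dApp_congr_right (A i₀) (hB i₀) s'')
          have e : Function.update (fun i => dApp (sx i) (A i) (B i)) i₀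
                (dApp (sx i₀) (A i₀) u')
              = fun i => dApp (sx i) (A i) (Function.update B i₀ u' i) := by
            funext i
            by_cases hi : i = i₀
            · subst hi; simp
            · rw [Function.update_of_ne hi, Function.update_of_ne hi]
          rw [e] at step
          exact Relation.ReflTransGen.single (CStep.head w step)
      | collapseT _ hid =>
          refine ⟨.comp (.mapT A) w,
            cstar_head w (cstar_mapT fun i => ?_),
            Relation.ReflTransGen.single (CStep.tail _ (CStep.idL _))⟩
          rw [hid i]
          exact Relation.ReflTransGen.single (dApp_id_right _ _)
  | tail _ s' =>
      exact ⟨.comp (.mapT fun i => dApp (sx i) (A i) (B i)) _,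
        Relation.ReflTransGen.single (CStep.tail _ s'),
        Relation.ReflTransGen.single (CStep.merge3T _ _ _)⟩

theorem joinH1S {X Y Z : Fin n → DObj m n p}
    (A : ∀ i, DTerm Φ Ψ (dSrc (sy i) (X i) (Y i)) (dTgt (sy i) (X i) (Y i)))
    (B : ∀ i, DTerm Φ Ψ (dSrc (sy i) (Y i) (Z i)) (dTgt (sy i) (Y i) (Z i)))
    {t' : DTerm Φ Ψ (.S X) (.S Y)} (hA : ∀ i, RN (A i))
    (s : CStep (.mapS A) t') :
    ∃ c, CStar (.mapS fun i => dApp (sy i) (A i) (B i)) c ∧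
      CStar (.comp t' (.mapS B)) c := by
  cases s with
  | argS _ i₀ u' s' =>
      refine ⟨.mapS fun i => dApp (sy i) (Function.update A i₀ u' i) (B i), ?_, ?_⟩
      · have step := CStep.argS (fun i => dApp (sy i) (A i) (B i)) i₀
          (dApp (sy i₀) u' (B i₀)) (dApp_congr_left (B i₀) (hA i₀) s')
        have e : Function.update (fun i => dApp (sy i) (A i) (B i)) i₀ (dApp (sy i₀) u' (B i₀))
            = fun i => dApp (sy i) (Function.update A i₀ u' i) (B i) := by
          funext i
          by_cases hi : i = i₀
          · subst hi; simp
          · rw [Function.update_of_ne hi, Function.update_of_ne hi]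
        rw [e] at step
        exact Relation.ReflTransGen.single step
      · exact Relation.ReflTransGen.single (CStep.merge2S _ _)
  | collapseS _ hid =>
      refine ⟨.mapS B, ?_, Relation.ReflTransGen.single (CStep.idL _)⟩
      refine cstar_mapS fun i => ?_
      rw [hid i]
      exact Relation.ReflTransGen.single (dApp_id_left _ _)

theorem joinH2S {X Y Z : Fin n → DObj m n p}
    (A : ∀ i, DTerm Φ Ψ (dSrc (sy i) (X i) (Y i)) (dTgt (sy i) (X i) (Y i)))
    (B : ∀ i, DTerm Φ Ψ (dSrc (sy i) (Y i) (Z i)) (dTgt (sy i) (Y i) (Z i)))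
    {t' : DTerm Φ Ψ (.S Y) (.S Z)} (hB : ∀ i, RN (B i))
    (s : CStep (.mapS B) t') :
    ∃ c, CStar (.mapS fun i => dApp (sy i) (A i) (B i)) c ∧
      CStar (.comp (.mapS A) t') c := by
  cases s with
  | argS _ i₀ u' s' =>
      refine ⟨.mapS fun i => dApp (sy i) (A i) (Function.update B i₀ u' i), ?_, ?_⟩
      · have step := CStep.argS (fun i => dApp (sy i) (A i) (B i)) i₀
          (dApp (sy i₀) (A i₀) u') (dApp_congr_right (A i₀) (hB i₀) s')
        have e : Function.update (fun i => dApp (sy i) (A i) (B i)) i₀ (dApp (sy i₀) (A i₀) u')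
            = fun i => dApp (sy i) (A i) (Function.update B i₀ u' i) := by
          funext i
          by_cases hi : i = i₀
          · subst hi; simp
          · rw [Function.update_of_ne hi, Function.update_of_ne hi]
        rw [e] at step
        exact Relation.ReflTransGen.single step
      · exact Relation.ReflTransGen.single (CStep.merge2S _ _)
  | collapseS _ hid =>
      refine ⟨.mapS A, ?_, Relation.ReflTransGen.single (CStep.idR _)⟩
      refine cstar_mapS fun i => ?_
      rw [hid i]
      exact Relation.ReflTransGen.single (dApp_id_right _ _)

theorem joinH3S {X Y Z : Fin n → DObj m n p} {W : DObj m n p}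
    (A : ∀ i, DTerm Φ Ψ (dSrc (sy i) (X i) (Y i)) (dTgt (sy i) (X i) (Y i)))
    (B : ∀ i, DTerm Φ Ψ (dSrc (sy i) (Y i) (Z i)) (dTgt (sy i) (Y i) (Z i)))
    (w : DTerm Φ Ψ (.S Z) W)
    {t' : DTerm Φ Ψ (.S X) (.S Y)} (hA : ∀ i, RN (A i))
    (s : CStep (.mapS A) t') :
    ∃ c, CStar (.comp (.mapS fun i => dApp (sy i) (A i) (B i)) w) c ∧
      CStar (.comp t' (.comp (.mapS B) w)) c := by
  cases s with
  | argS _ i₀ u' s' =>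
      refine ⟨.comp (.mapS fun i => dApp (sy i) (Function.update A i₀ u' i) (B i)) w, ?_, ?_⟩
      · have step := CStep.argS (fun i => dApp (sy i) (A i) (B i)) i₀
          (dApp (sy i₀) u' (B i₀)) (dApp_congr_left (B i₀) (hA i₀) s')
        have e : Function.update (fun i => dApp (sy i) (A i) (B i)) i₀ (dApp (sy i₀) u' (B i₀))
            = fun i => dApp (sy i) (Function.update A i₀ u' i) (B i) := by
          funext i
          by_cases hi : i = i₀
          · subst hi; simp
          · rw [Function.update_of_ne hi, Function.update_of_ne hi]
        rw [e] at step
        exact Relation.ReflTransGen.single (CStep.head w step)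
      · exact Relation.ReflTransGen.single (CStep.merge3S _ _ w)
  | collapseS _ hid =>
      refine ⟨.comp (.mapS B) w, ?_, Relation.ReflTransGen.single (CStep.idL _)⟩
      refine cstar_head w (cstar_mapS fun i => ?_)
      rw [hid i]
      exact Relation.ReflTransGen.single (dApp_id_left _ _)

theorem joinH4S {X Y Z : Fin n → DObj m n p} {W : DObj m n p}
    (A : ∀ i, DTerm Φ Ψ (dSrc (sy i) (X i) (Y i)) (dTgt (sy i) (X i) (Y i)))
    (B : ∀ i, DTerm Φ Ψ (dSrc (sy i) (Y i) (Z i)) (dTgt (sy i) (Y i) (Z i)))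
    (w : DTerm Φ Ψ (.S Z) W)
    {t' : DTerm Φ Ψ (.S Y) W} (hA : ∀ i, RN (A i)) (hB : ∀ i, RN (B i)) (hw : RN w)
    (s : CStep (.comp (.mapS B) w) t') :
    ∃ c, CStar (.comp (.mapS fun i => dApp (sy i) (A i) (B i)) w) c ∧
      CStar (.comp (.mapS A) t') c := by
  cases s with
  | idR =>
      exact ⟨.mapS fun i => dApp (sy i) (A i) (B i),
        Relation.ReflTransGen.single (CStep.idR _),
        Relation.ReflTransGen.single (CStep.merge2S _ _)⟩
  | merge2S _ C =>
      refine ⟨.mapS fun i => dApp (sy i) (dApp (sy i) (A i) (B i)) (C i),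
        Relation.ReflTransGen.single (CStep.merge2S _ _), ?_⟩
      have e : (DTerm.mapS (Φ := Φ) (Ψ := Ψ)
            fun i => dApp (sy i) (dApp (sy i) (A i) (B i)) (C i))
          = .mapS fun i => dApp (sy i) (A i) (dApp (sy i) (B i) (C i)) := by
        congr 1; funext i; exact dApp_assoc _ _ _ _
      rw [e]
      exact Relation.ReflTransGen.single (CStep.merge2S _ _)
  | merge3S _ C w' =>
      refine ⟨.comp (.mapS fun i => dApp (sy i) (dApp (sy i) (A i) (B i)) (C i)) w',
        Relation.ReflTransGen.single (CStep.merge3S _ _ w'), ?_⟩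
      have e : (DTerm.mapS (Φ := Φ) (Ψ := Ψ)
            fun i => dApp (sy i) (dApp (sy i) (A i) (B i)) (C i))
          = .mapS fun i => dApp (sy i) (A i) (dApp (sy i) (B i) (C i)) := by
        congr 1; funext i; exact dApp_assoc _ _ _ _
      rw [e]
      exact Relation.ReflTransGen.single (CStep.merge3S _ _ w')
  | head _ s' =>
      cases s' with
      | argS _ i₀ u' s'' =>
          refine ⟨.comp (.mapS fun i => dApp (sy i) (A i) (Function.update B i₀ u' i)) w,
            ?_, Relation.ReflTransGen.single (CStep.merge3S _ _ w)⟩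
          have step := CStep.argS (fun i => dApp (sy i) (A i) (B i)) i₀
            (dApp (sy i₀) (A i₀) u') (dApp_congr_right (A i₀) (hB i₀) s'')
          have e : Function.update (fun i => dApp (sy i) (A i) (B i)) i₀
                (dApp (sy i₀) (A i₀) u')
              = fun i => dApp (sy i) (A i) (Function.update B i₀ u' i) := by
            funext i
            by_cases hi : i = i₀
            · subst hi; simp
            · rw [Function.update_of_ne hi, Function.update_of_ne hi]
          rw [e] at step
          exact Relation.ReflTransGen.single (CStep.head w step)
      | collapseS _ hid =>
          refine ⟨.comp (.mapS A) w,
            cstar_head w (cstar_mapS fun i => ?_),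
            Relation.ReflTransGen.single (CStep.tail _ (CStep.idL _))⟩
          rw [hid i]
          exact Relation.ReflTransGen.single (dApp_id_right _ _)
  | tail _ s' =>
      exact ⟨.comp (.mapS fun i => dApp (sy i) (A i) (B i)) _,
        Relation.ReflTransGen.single (CStep.tail _ s'),
        Relation.ReflTransGen.single (CStep.merge3S _ _ _)⟩

theorem joinH1R {X Y Z : Fin p → DObj m n p}
    (A : ∀ i, DTerm Φ Ψ (dSrc (sz i) (X i) (Y i)) (dTgt (sz i) (X i) (Y i)))
    (B : ∀ i, DTerm Φ Ψ (dSrc (sz i) (Y i) (Z i)) (dTgt (sz i) (Y i) (Z i)))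
    {t' : DTerm Φ Ψ (.R X) (.R Y)} (hA : ∀ i, RN (A i))
    (s : CStep (.mapR A) t') :
    ∃ c, CStar (.mapR fun i => dApp (sz i) (A i) (B i)) c ∧
      CStar (.comp t' (.mapR B)) c := by
  cases s with
  | argR _ i₀ u' s' =>
      refine ⟨.mapR fun i => dApp (sz i) (Function.update A i₀ u' i) (B i), ?_, ?_⟩
      · have step := CStep.argR (fun i => dApp (sz i) (A i) (B i)) i₀
          (dApp (sz i₀) u' (B i₀)) (dApp_congr_left (B i₀) (hA i₀) s')
        have e : Function.update (fun i => dApp (sz i) (A i) (B i)) i₀ (dApp (sz i₀) u' (B i₀))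
            = fun i => dApp (sz i) (Function.update A i₀ u' i) (B i) := by
          funext i
          by_cases hi : i = i₀
          · subst hi; simp
          · rw [Function.update_of_ne hi, Function.update_of_ne hi]
        rw [e] at step
        exact Relation.ReflTransGen.single step
      · exact Relation.ReflTransGen.single (CStep.merge2R _ _)
  | collapseR _ hid =>
      refine ⟨.mapR B, ?_, Relation.ReflTransGen.single (CStep.idL _)⟩
      refine cstar_mapR fun i => ?_
      rw [hid i]
      exact Relation.ReflTransGen.single (dApp_id_left _ _)

theorem joinH2R {X Y Z : Fin p → DObj m n p}
    (A : ∀ i, DTerm Φ Ψ (dSrc (sz i) (X i) (Y i)) (dTgt (sz i) (X i) (Y i)))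
    (B : ∀ i, DTerm Φ Ψ (dSrc (sz i) (Y i) (Z i)) (dTgt (sz i) (Y i) (Z i)))
    {t' : DTerm Φ Ψ (.R Y) (.R Z)} (hB : ∀ i, RN (B i))
    (s : CStep (.mapR B) t') :
    ∃ c, CStar (.mapR fun i => dApp (sz i) (A i) (B i)) c ∧
      CStar (.comp (.mapR A) t') c := by
  cases s with
  | argR _ i₀ u' s' =>
      refine ⟨.mapR fun i => dApp (sz i) (A i) (Function.update B i₀ u' i), ?_, ?_⟩
      · have step := CStep.argR (fun i => dApp (sz i) (A i) (B i)) i₀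
          (dApp (sz i₀) (A i₀) u') (dApp_congr_right (A i₀) (hB i₀) s')
        have e : Function.update (fun i => dApp (sz i) (A i) (B i)) i₀ (dApp (sz i₀) (A i₀) u')
            = fun i => dApp (sz i) (A i) (Function.update B i₀ u' i) := by
          funext i
          by_cases hi : i = i₀
          · subst hi; simp
          · rw [Function.update_of_ne hi, Function.update_of_ne hi]
        rw [e] at step
        exact Relation.ReflTransGen.single step
      · exact Relation.ReflTransGen.single (CStep.merge2R _ _)
  | collapseR _ hid =>
      refine ⟨.mapR A, ?_, Relation.ReflTransGen.single (CStep.idR _)⟩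
      refine cstar_mapR fun i => ?_
      rw [hid i]
      exact Relation.ReflTransGen.single (dApp_id_right _ _)

theorem joinH3R {X Y Z : Fin p → DObj m n p} {W : DObj m n p}
    (A : ∀ i, DTerm Φ Ψ (dSrc (sz i) (X i) (Y i)) (dTgt (sz i) (X i) (Y i)))
    (B : ∀ i, DTerm Φ Ψ (dSrc (sz i) (Y i) (Z i)) (dTgt (sz i) (Y i) (Z i)))
    (w : DTerm Φ Ψ (.R Z) W)
    {t' : DTerm Φ Ψ (.R X) (.R Y)} (hA : ∀ i, RN (A i))
    (s : CStep (.mapR A) t') :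
    ∃ c, CStar (.comp (.mapR fun i => dApp (sz i) (A i) (B i)) w) c ∧
      CStar (.comp t' (.comp (.mapR B) w)) c := by
  cases s with
  | argR _ i₀ u' s' =>
      refine ⟨.comp (.mapR fun i => dApp (sz i) (Function.update A i₀ u' i) (B i)) w, ?_, ?_⟩
      · have step := CStep.argR (fun i => dApp (sz i) (A i) (B i)) i₀
          (dApp (sz i₀) u' (B i₀)) (dApp_congr_left (B i₀) (hA i₀) s')
        have e : Function.update (fun i => dApp (sz i) (A i) (B i)) i₀ (dApp (sz i₀) u' (B i₀))
            = fun i => dApp (sz i) (Function.update A i₀ u' i) (B i) := by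
          funext i
          by_cases hi : i = i₀
          · subst hi; simp
          · rw [Function.update_of_ne hi, Function.update_of_ne hi]
        rw [e] at step
        exact Relation.ReflTransGen.single (CStep.head w step)
      · exact Relation.ReflTransGen.single (CStep.merge3R _ _ w)
  | collapseR _ hid =>
      refine ⟨.comp (.mapR B) w, ?_, Relation.ReflTransGen.single (CStep.idL _)⟩
      refine cstar_head w (cstar_mapR fun i => ?_)
      rw [hid i]
      exact Relation.ReflTransGen.single (dApp_id_left _ _)

theorem joinH4R {X Y Z : Fin p → DObj m n p} {W : DObj m n p}
    (A : ∀ i, DTerm Φ Ψ (dSrc (sz i) (X i) (Y i)) (dTgt (sz i) (X i) (Y i)))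
    (B : ∀ i, DTerm Φ Ψ (dSrc (sz i) (Y i) (Z i)) (dTgt (sz i) (Y i) (Z i)))
    (w : DTerm Φ Ψ (.R Z) W)
    {t' : DTerm Φ Ψ (.R Y) W} (hA : ∀ i, RN (A i)) (hB : ∀ i, RN (B i)) (hw : RN w)
    (s : CStep (.comp (.mapR B) w) t') :
    ∃ c, CStar (.comp (.mapR fun i => dApp (sz i) (A i) (B i)) w) c ∧
      CStar (.comp (.mapR A) t') c := by
  cases s with
  | idR =>
      exact ⟨.mapR fun i => dApp (sz i) (A i) (B i),
        Relation.ReflTransGen.single (CStep.idR _),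
        Relation.ReflTransGen.single (CStep.merge2R _ _)⟩
  | merge2R _ C =>
      refine ⟨.mapR fun i => dApp (sz i) (dApp (sz i) (A i) (B i)) (C i),
        Relation.ReflTransGen.single (CStep.merge2R _ _), ?_⟩
      have e : (DTerm.mapR (Φ := Φ) (Ψ := Ψ)
            fun i => dApp (sz i) (dApp (sz i) (A i) (B i)) (C i))
          = .mapR fun i => dApp (sz i) (A i) (dApp (sz i) (B i) (C i)) := by
        congr 1; funext i; exact dApp_assoc _ _ _ _
      rw [e]
      exact Relation.ReflTransGen.single (CStep.merge2R _ _)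
  | merge3R _ C w' =>
      refine ⟨.comp (.mapR fun i => dApp (sz i) (dApp (sz i) (A i) (B i)) (C i)) w',
        Relation.ReflTransGen.single (CStep.merge3R _ _ w'), ?_⟩
      have e : (DTerm.mapR (Φ := Φ) (Ψ := Ψ)
            fun i => dApp (sz i) (dApp (sz i) (A i) (B i)) (C i))
          = .mapR fun i => dApp (sz i) (A i) (dApp (sz i) (B i) (C i)) := by
        congr 1; funext i; exact dApp_assoc _ _ _ _
      rw [e]
      exact Relation.ReflTransGen.single (CStep.merge3R _ _ w')
  | head _ s' =>
      cases s' with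
      | argR _ i₀ u' s'' =>
          refine ⟨.comp (.mapR fun i => dApp (sz i) (A i) (Function.update B i₀ u' i)) w,
            ?_, Relation.ReflTransGen.single (CStep.merge3R _ _ w)⟩
          have step := CStep.argR (fun i => dApp (sz i) (A i) (B i)) i₀
            (dApp (sz i₀) (A i₀) u') (dApp_congr_right (A i₀) (hB i₀) s'')
          have e : Function.update (fun i => dApp (sz i) (A i) (B i)) i₀
                (dApp (sz i₀) (A i₀) u')
              = fun i => dApp (sz i) (A i) (Function.update B i₀ u' i) := by
            funext i
            by_cases hi : i = i₀
            · subst hi; simp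
            · rw [Function.update_of_ne hi, Function.update_of_ne hi]
          rw [e] at step
          exact Relation.ReflTransGen.single (CStep.head w step)
      | collapseR _ hid =>
          refine ⟨.comp (.mapR A) w,
            cstar_head w (cstar_mapR fun i => ?_),
            Relation.ReflTransGen.single (CStep.tail _ (CStep.idL _))⟩
          rw [hid i]
          exact Relation.ReflTransGen.single (dApp_id_right _ _)
  | tail _ s' =>
      exact ⟨.comp (.mapR fun i => dApp (sz i) (A i) (B i)) _,
        Relation.ReflTransGen.single (CStep.tail _ s'),
        Relation.ReflTransGen.single (CStep.merge3R _ _ _)⟩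

theorem not_cstep_dId {X : DObj m n p} {b : Bool}
    {v : DTerm Φ Ψ (dSrc b X X) (dTgt b X X)} :
    ¬ CStep (dId X b) v := by
  cases b
  · exact not_cstep_id
  · exact not_cstep_id

set_option maxHeartbeats 1000000 in
/-- local confluence of `CStep` on right-nested terms -/
theorem local_conf : ∀ (N : ℕ) {X Y : DObj m n p} (u a b : DTerm Φ Ψ X Y),
    wt u ≤ N → RN u → CStep u a → CStep u b →
    ∃ c, CStar a c ∧ CStar b c := by
  intro N
  induction N using Nat.strong_induction_on with
  | _ N IH =>
  intro X Y u a b hN hRN sa sb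
  cases sa with
  | idL w =>
      cases sb with
      | idL => exact ⟨_, Relation.ReflTransGen.refl, Relation.ReflTransGen.refl⟩
      | idR => exact ⟨_, Relation.ReflTransGen.refl, Relation.ReflTransGen.refl⟩
      | head _ s' => exact absurd s' not_cstep_id
      | tail _ s' =>
          exact ⟨_, Relation.ReflTransGen.single s',
            Relation.ReflTransGen.single (CStep.idL _)⟩
  | idR g =>
      cases sb with
      | idL => exact ⟨_, Relation.ReflTransGen.refl, Relation.ReflTransGen.refl⟩
      | idR => exact ⟨_, Relation.ReflTransGen.refl, Relation.ReflTransGen.refl⟩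
      | head _ s' =>
          exact ⟨_, Relation.ReflTransGen.single s',
            Relation.ReflTransGen.single (CStep.idR _)⟩
      | tail _ s' => exact absurd s' not_cstep_id

  | merge2T A B =>
      cases hRN with
      | comp h₁ h₂ h₃ =>
        cases h₂ with | mapT hA =>
        cases h₃ with | mapT hB =>
        cases sb with
        | merge2T => exact ⟨_, Relation.ReflTransGen.refl, Relation.ReflTransGen.refl⟩
        | head _ s' => exact joinH1T A B hA s'
        | tail _ s' => exact joinH2T A B hB s'
  | merge3T A B w =>
      cases hRN with
      | comp h₁ h₂ h₃ =>
        cases h₂ with | mapT hA =>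
        cases h₃ with
        | comp h₄ h₅ h₆ =>
          cases h₅ with | mapT hB =>
          cases sb with
          | merge3T => exact ⟨_, Relation.ReflTransGen.refl, Relation.ReflTransGen.refl⟩
          | head _ s' => exact joinH3T A B w hA s'
          | tail _ s' => exact joinH4T A B w hA hB h₆ s'
  | collapseT A hid =>
      cases sb with
      | collapseT => exact ⟨_, Relation.ReflTransGen.refl, Relation.ReflTransGen.refl⟩
      | argT _ i₀ u' s' =>
          rw [hid i₀] at s'
          exact absurd s' not_cstep_dId
  | merge2S A B =>
      cases hRN with
      | comp h₁ h₂ h₃ =>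
        cases h₂ with | mapS hA =>
        cases h₃ with | mapS hB =>
        cases sb with
        | merge2S => exact ⟨_, Relation.ReflTransGen.refl, Relation.ReflTransGen.refl⟩
        | head _ s' => exact joinH1S A B hA s'
        | tail _ s' => exact joinH2S A B hB s'
  | merge3S A B w =>
      cases hRN with
      | comp h₁ h₂ h₃ =>
        cases h₂ with | mapS hA =>
        cases h₃ with
        | comp h₄ h₅ h₆ =>
          cases h₅ with | mapS hB =>
          cases sb with
          | merge3S => exact ⟨_, Relation.ReflTransGen.refl, Relation.ReflTransGen.refl⟩
          | head _ s' => exact joinH3S A B w hA s'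
          | tail _ s' => exact joinH4S A B w hA hB h₆ s'
  | collapseS A hid =>
      cases sb with
      | collapseS => exact ⟨_, Relation.ReflTransGen.refl, Relation.ReflTransGen.refl⟩
      | argS _ i₀ u' s' =>
          rw [hid i₀] at s'
          exact absurd s' not_cstep_dId
  | merge2R A B =>
      cases hRN with
      | comp h₁ h₂ h₃ =>
        cases h₂ with | mapR hA =>
        cases h₃ with | mapR hB =>
        cases sb with
        | merge2R => exact ⟨_, Relation.ReflTransGen.refl, Relation.ReflTransGen.refl⟩
        | head _ s' => exact joinH1R A B hA s'
        | tail _ s' => exact joinH2R A B hB s'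
  | merge3R A B w =>
      cases hRN with
      | comp h₁ h₂ h₃ =>
        cases h₂ with | mapR hA =>
        cases h₃ with
        | comp h₄ h₅ h₆ =>
          cases h₅ with | mapR hB =>
          cases sb with
          | merge3R => exact ⟨_, Relation.ReflTransGen.refl, Relation.ReflTransGen.refl⟩
          | head _ s' => exact joinH3R A B w hA s'
          | tail _ s' => exact joinH4R A B w hA hB h₆ s'
  | collapseR A hid =>
      cases sb with
      | collapseR => exact ⟨_, Relation.ReflTransGen.refl, Relation.ReflTransGen.refl⟩
      | argR _ i₀ u' s' =>
          rw [hid i₀] at s'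
          exact absurd s' not_cstep_dId
  | head w s' =>
      cases hRN with
      | comp h₁ h₂ h₃ =>
      cases sb with
      | idL => exact absurd s' not_cstep_id
      | idR =>
          exact ⟨_, Relation.ReflTransGen.single (CStep.idR _),
            Relation.ReflTransGen.single s'⟩

      | merge2T A B =>
          cases h₂ with | mapT hA =>
          obtain ⟨c, hc1, hc2⟩ := joinH1T A B hA s'
          exact ⟨c, hc2, hc1⟩
      | merge3T A B w₂ =>
          cases h₂ with | mapT hA =>
          obtain ⟨c, hc1, hc2⟩ := joinH3T A B w₂ hA s'
          exact ⟨c, hc2, hc1⟩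
      | merge2S A B =>
          cases h₂ with | mapS hA =>
          obtain ⟨c, hc1, hc2⟩ := joinH1S A B hA s'
          exact ⟨c, hc2, hc1⟩
      | merge3S A B w₂ =>
          cases h₂ with | mapS hA =>
          obtain ⟨c, hc1, hc2⟩ := joinH3S A B w₂ hA s'
          exact ⟨c, hc2, hc1⟩
      | merge2R A B =>
          cases h₂ with | mapR hA =>
          obtain ⟨c, hc1, hc2⟩ := joinH1R A B hA s'
          exact ⟨c, hc2, hc1⟩
      | merge3R A B w₂ =>
          cases h₂ with | mapR hA =>
          obtain ⟨c, hc1, hc2⟩ := joinH3R A B w₂ hA s'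
          exact ⟨c, hc2, hc1⟩
      | head _ s'' =>
          obtain ⟨c, hc1, hc2⟩ := IH (wt _)
            (lt_of_lt_of_le (wt_lt_head _ w) hN) _ _ _ (le_refl _) h₂ s' s''
          exact ⟨.comp c w, cstar_head w hc1, cstar_head w hc2⟩
      | tail _ s'' =>
          exact ⟨_, Relation.ReflTransGen.single (CStep.tail _ s''),
            Relation.ReflTransGen.single (CStep.head _ s')⟩
  | tail t s' =>
      cases hRN with
      | comp h₁ h₂ h₃ =>
      cases sb with
      | idL =>
          exact ⟨_, Relation.ReflTransGen.single (CStep.idL _),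
            Relation.ReflTransGen.single s'⟩
      | idR => exact absurd s' not_cstep_id

      | merge2T A B =>
          cases h₂ with | mapT hA =>
          cases h₃ with | mapT hB =>
          obtain ⟨c, hc1, hc2⟩ := joinH2T A B hB s'
          exact ⟨c, hc2, hc1⟩
      | merge3T A B w₂ =>
          cases h₂ with | mapT hA =>
          cases h₃ with
          | comp h₄ h₅ h₆ =>
            cases h₅ with | mapT hB =>
            obtain ⟨c, hc1, hc2⟩ := joinH4T A B w₂ hA hB h₆ s'
            exact ⟨c, hc2, hc1⟩
      | merge2S A B =>
          cases h₂ with | mapS hA =>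
          cases h₃ with | mapS hB =>
          obtain ⟨c, hc1, hc2⟩ := joinH2S A B hB s'
          exact ⟨c, hc2, hc1⟩
      | merge3S A B w₂ =>
          cases h₂ with | mapS hA =>
          cases h₃ with
          | comp h₄ h₅ h₆ =>
            cases h₅ with | mapS hB =>
            obtain ⟨c, hc1, hc2⟩ := joinH4S A B w₂ hA hB h₆ s'
            exact ⟨c, hc2, hc1⟩
      | merge2R A B =>
          cases h₂ with | mapR hA =>
          cases h₃ with | mapR hB =>
          obtain ⟨c, hc1, hc2⟩ := joinH2R A B hB s'
          exact ⟨c, hc2, hc1⟩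
      | merge3R A B w₂ =>
          cases h₂ with | mapR hA =>
          cases h₃ with
          | comp h₄ h₅ h₆ =>
            cases h₅ with | mapR hB =>
            obtain ⟨c, hc1, hc2⟩ := joinH4R A B w₂ hA hB h₆ s'
            exact ⟨c, hc2, hc1⟩
      | head _ s'' =>
          exact ⟨_, Relation.ReflTransGen.single (CStep.head _ s''),
            Relation.ReflTransGen.single (CStep.tail _ s')⟩
      | tail _ s'' =>
          obtain ⟨c, hc1, hc2⟩ := IH (wt _)
            (lt_of_lt_of_le (wt_lt_tail t _) hN) _ _ _ (le_refl _) h₃ s' s''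
          exact ⟨.comp t c, cstar_tail t hc1, cstar_tail t hc2⟩

  | argT a i₀ t' s' =>
      cases hRN with
      | mapT ha =>
        cases sb with
        | collapseT _ hid =>
            rw [hid i₀] at s'
            exact absurd s' not_cstep_dId
        | argT _ j₀ u' s'' =>
            by_cases hij : i₀ = j₀
            · subst hij
              obtain ⟨c₀, hc1, hc2⟩ := IH (wt (a i₀))
                (lt_of_lt_of_le (wt_lt_argT a i₀) hN) _ _ _ (le_refl _) (ha i₀) s' s''
              refine ⟨.mapT (Function.update a i₀ c₀), ?_, ?_⟩
              · have h5 := cstar_argT (Function.update a i₀ t') i₀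
                  (t' := c₀) (by simpa using hc1)
                simpa [Function.update_idem] using h5
              · have h5 := cstar_argT (Function.update a i₀ u') i₀
                  (t' := c₀) (by simpa using hc2)
                simpa [Function.update_idem] using h5
            · refine ⟨.mapT (Function.update (Function.update a i₀ t') j₀ u'), ?_, ?_⟩
              · refine Relation.ReflTransGen.single
                  (CStep.argT _ j₀ u' ?_)
                rw [Function.update_of_ne (Ne.symm hij)]
                exact s''
              · have step := CStep.argT (Function.update a j₀ u') i₀ t'
                  (by rw [Function.update_of_ne hij]; exact s')
                rw [Function.update_comm hij t' u' a]
                exact Relation.ReflTransGen.single step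
  | argS a i₀ t' s' =>
      cases hRN with
      | mapS ha =>
        cases sb with
        | collapseS _ hid =>
            rw [hid i₀] at s'
            exact absurd s' not_cstep_dId
        | argS _ j₀ u' s'' =>
            by_cases hij : i₀ = j₀
            · subst hij
              obtain ⟨c₀, hc1, hc2⟩ := IH (wt (a i₀))
                (lt_of_lt_of_le (wt_lt_argS a i₀) hN) _ _ _ (le_refl _) (ha i₀) s' s''
              refine ⟨.mapS (Function.update a i₀ c₀), ?_, ?_⟩
              · have h5 := cstar_argS (Function.update a i₀ t') i₀
                  (t' := c₀) (by simpa using hc1)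
                simpa [Function.update_idem] using h5
              · have h5 := cstar_argS (Function.update a i₀ u') i₀
                  (t' := c₀) (by simpa using hc2)
                simpa [Function.update_idem] using h5
            · refine ⟨.mapS (Function.update (Function.update a i₀ t') j₀ u'), ?_, ?_⟩
              · refine Relation.ReflTransGen.single
                  (CStep.argS _ j₀ u' ?_)
                rw [Function.update_of_ne (Ne.symm hij)]
                exact s''
              · have step := CStep.argS (Function.update a j₀ u') i₀ t'
                  (by rw [Function.update_of_ne hij]; exact s')
                rw [Function.update_comm hij t' u' a]
                exact Relation.ReflTransGen.single step
  | argR a i₀ t' s' =>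
      cases hRN with
      | mapR ha =>
        cases sb with
        | collapseR _ hid =>
            rw [hid i₀] at s'
            exact absurd s' not_cstep_dId
        | argR _ j₀ u' s'' =>
            by_cases hij : i₀ = j₀
            · subst hij
              obtain ⟨c₀, hc1, hc2⟩ := IH (wt (a i₀))
                (lt_of_lt_of_le (wt_lt_argR a i₀) hN) _ _ _ (le_refl _) (ha i₀) s' s''
              refine ⟨.mapR (Function.update a i₀ c₀), ?_, ?_⟩
              · have h5 := cstar_argR (Function.update a i₀ t') i₀
                  (t' := c₀) (by simpa using hc1)
                simpa [Function.update_idem] using h5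
              · have h5 := cstar_argR (Function.update a i₀ u') i₀
                  (t' := c₀) (by simpa using hc2)
                simpa [Function.update_idem] using h5
            · refine ⟨.mapR (Function.update (Function.update a i₀ t') j₀ u'), ?_, ?_⟩
              · refine Relation.ReflTransGen.single
                  (CStep.argR _ j₀ u' ?_)
                rw [Function.update_of_ne (Ne.symm hij)]
                exact s''
              · have step := CStep.argR (Function.update a j₀ u') i₀ t'
                  (by rw [Function.update_of_ne hij]; exact s')
                rw [Function.update_comm hij t' u' a]
                exact Relation.ReflTransGen.single step

theorem wt_cstep_lt {X Y : DObj m n p} {g h : DTerm Φ Ψ X Y} (s : CStep g h) :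
    wt h < wt g := wt_step_lt (cfstep_of_cstep s)

/-- Newman's lemma for `CStep` on right-nested terms -/
theorem conf : ∀ (N : ℕ) {X Y : DObj m n p} (u a b : DTerm Φ Ψ X Y),
    wt u ≤ N → RN u → CStar u a → CStar u b → ∃ c, CStar a c ∧ CStar b c := by
  intro N
  induction N using Nat.strong_induction_on with
  | _ N IH =>
  intro X Y u a b hN hRN ha hb
  rcases ha.cases_head with rfl | ⟨a₁, s₁, ha'⟩
  · exact ⟨b, hb, Relation.ReflTransGen.refl⟩
  rcases hb.cases_head with rfl | ⟨b₁, s₂, hb'⟩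
  · exact ⟨a, Relation.ReflTransGen.refl, ha⟩
  obtain ⟨d, hd1, hd2⟩ := local_conf N u a₁ b₁ hN hRN s₁ s₂
  have hRa := RN_cstep s₁ hRN
  have hRb := RN_cstep s₂ hRN
  obtain ⟨e, he1, he2⟩ := IH (wt a₁) (lt_of_lt_of_le (wt_cstep_lt s₁) hN)
    a₁ a d (le_refl _) hRa ha' hd1
  obtain ⟨c, hc1, hc2⟩ := IH (wt b₁) (lt_of_lt_of_le (wt_cstep_lt s₂) hN)
    b₁ b e (le_refl _) hRb hb' (hd2.trans he2)
  exact ⟨c, he1.trans hc2, hc1⟩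

theorem cstar_cfstar {X Y : DObj m n p} {u v : DTerm Φ Ψ X Y} (h : CStar u v) :
    Relation.ReflTransGen CFStep u v :=
  Relation.ReflTransGen.mono (fun _ _ s => cfstep_of_cstep s) _ _ h

theorem cfstar_cstar_can {X Y : DObj m n p} {g h : DTerm Φ Ψ X Y}
    (s : Relation.ReflTransGen CFStep g h) : CStar (can g) (can h) :=
  Relation.ReflTransGen.lift can (fun _ _ t => cstep_can_of_cfstep t) _ _ s

theorem cfstar_of_aeq {X Y : DObj m n p} {g u v : DTerm Φ Ψ X Y}
    (e : AEq g u) (s : Relation.ReflTransGen CFStep u v) :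
    ∃ v', Relation.ReflTransGen CFStep g v' ∧ AEq v' v := by
  rcases s.cases_head with rfl | ⟨w, s₁, rest⟩
  · exact ⟨g, Relation.ReflTransGen.refl, e⟩
  · exact ⟨v, Relation.ReflTransGen.head (cfstep_aeq_left e s₁) rest, AEq.refl _⟩

theorem normal_no_cstep {X Y : DObj m n p} {g : DTerm Φ Ψ X Y} (hg : CFNormal g)
    {v : DTerm Φ Ψ X Y} : ¬ CStep (can g) v :=
  fun s => hg ⟨v, cfstep_aeq_left (aeq_can g) (cfstep_of_cstep s)⟩

theorem normal_cstar_eq {X Y : DObj m n p} {g : DTerm Φ Ψ X Y} (hg : CFNormal g)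
    {v : DTerm Φ Ψ X Y} (s : CStar (can g) v) : can g = v := by
  rcases s.cases_head with rfl | ⟨w, s₁, _⟩
  · rfl
  · exact absurd s₁ (normal_no_cstep hg)

theorem wcr_main {X Y : DObj m n p} (g a b : DTerm Φ Ψ X Y)
    (sa : CFStep g a) (sb : CFStep g b) :
    ∃ a' b', Relation.ReflTransGen CFStep a a' ∧
      Relation.ReflTransGen CFStep b b' ∧ AEq a' b' := by
  obtain ⟨c, h1, h2⟩ := local_conf (wt (can g)) (can g) _ _ (le_refl _) (RN_can g)
    (cstep_can_of_cfstep sa) (cstep_can_of_cfstep sb)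
  obtain ⟨a', ha1, ha2⟩ := cfstar_of_aeq (aeq_can a) (cstar_cfstar h1)
  obtain ⟨b', hb1, hb2⟩ := cfstar_of_aeq (aeq_can b) (cstar_cfstar h2)
  exact ⟨a', b', ha1, hb1, ha2.trans (AEq.symm hb2)⟩

theorem exists_nf_main : ∀ (N : ℕ) {X Y : DObj m n p} (g : DTerm Φ Ψ X Y), wt g ≤ N →
    ∃ nf, Relation.ReflTransGen CFStep g nf ∧ CFNormal nf := by
  intro N
  induction N using Nat.strong_induction_on with
  | _ N IH =>
  intro X Y g hN
  by_cases hn : CFNormal g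
  · exact ⟨g, Relation.ReflTransGen.refl, hn⟩
  · obtain ⟨h, s⟩ := Classical.not_not.mp hn
    obtain ⟨nf, hr, hnf⟩ := IH (wt h) (lt_of_lt_of_le (wt_step_lt s) hN) h (le_refl _)
    exact ⟨nf, Relation.ReflTransGen.head s hr, hnf⟩

theorem unique_nf_main {X Y : DObj m n p} (g nf₁ nf₂ : DTerm Φ Ψ X Y)
    (r₁ : Relation.ReflTransGen CFStep g nf₁) (r₂ : Relation.ReflTransGen CFStep g nf₂)
    (h₁ : CFNormal nf₁) (h₂ : CFNormal nf₂) : AEq nf₁ nf₂ := by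
  obtain ⟨c, hc1, hc2⟩ := conf (wt (can g)) (can g) _ _ (le_refl _) (RN_can g)
    (cfstar_cstar_can r₁) (cfstar_cstar_can r₂)
  have e₁ : can nf₁ = c := normal_cstar_eq h₁ hc1
  have e₂ : can nf₂ = c := normal_cstar_eq h₂ hc2
  have : can nf₁ = can nf₂ := e₁.trans e₂.symm
  exact (aeq_can nf₁).trans (this ▸ AEq.symm (aeq_can nf₂))

end ConfProof

/-- Lemma 2.5 of the paper.  The `CF` reduction relation on
morphism terms of `𝒟` (taken up to associativity of composition) is strongly
normalizing and weakly Church–Rosser; consequently every morphism term `g` has a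
`CF` normal form, which is unique (up to associativity of composition). -/
theorem cf_SN_WCR_uniqueNF
    {m n p gΦ gΨ : ℕ} {sx : Fin m → Bool} {sy : Fin n → Bool} {sz : Fin p → Bool}
    {Φ : GGraph m n gΦ sx sy} {Ψ : GGraph n p gΨ sy sz} :
    -- strong normalization
    (∀ {X Y : DObj m n p} (seq : ℕ → DTerm Φ Ψ X Y),
        ¬ ∀ t, CFStep (seq t) (seq (t + 1))) ∧
    -- weak Church–Rosser
    (∀ {X Y : DObj m n p} (g a b : DTerm Φ Ψ X Y), CFStep g a → CFStep g b →
        ∃ a' b', Relation.ReflTransGen CFStep a a' ∧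
          Relation.ReflTransGen CFStep b b' ∧ AEq a' b') ∧
    -- existence of normal forms
    (∀ {X Y : DObj m n p} (g : DTerm Φ Ψ X Y),
        ∃ nf, Relation.ReflTransGen CFStep g nf ∧ CFNormal nf) ∧
    -- uniqueness of normal forms
    (∀ {X Y : DObj m n p} (g nf₁ nf₂ : DTerm Φ Ψ X Y),
        Relation.ReflTransGen CFStep g nf₁ → Relation.ReflTransGen CFStep g nf₂ →
        CFNormal nf₁ → CFNormal nf₂ → AEq nf₁ nf₂) := by
  refine ⟨?_, ?_, ?_, ?_⟩
  · intro X Y seq h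
    have mono : ∀ t, wt (seq (t + 1)) < wt (seq t) := fun t => wt_step_lt (h t)
    have key : ∀ t, wt (seq t) + t ≤ wt (seq 0) := by
      intro t
      induction t with
      | zero => omega
      | succ t ih => have := mono t; omega
    have := key (wt (seq 0) + 1)
    omega
  · intro X Y g a b sa sb
    exact wcr_main g a b sa sb
  · intro X Y g
    exact exists_nf_main (wt g) g (le_refl _)
  · intro X Y g nf₁ nf₂ r₁ r₂ h₁ h₂
    exact unique_nf_main g nf₁ nf₂ r₁ r₂ h₁ h₂
end GDin
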